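/- arXiv:2307.08021 — 2 statements merged into one kernel-verified Lean document; each statement's English description precedes it below -/
import Mathlib

section
/- Let μ ∈ M(X_1,T_1) and let α_i be finite Borel partitions of X_i, i=1,…,k. Then Σ_{i=1}^k a_i h_μ(T_1, ⋁_{j=i}^k τ_{j−1}^{−1}α_j) ≤ liminf_{N→∞} (1/N) H_μ( ⋁_{i=1}^k (τ_{i−1}^{−1}α_i)_0^{⌈(a_1+…+a_i)N⌉−1} ). -/
open MeasureTheory Set Filter Topology
open scoped ENNReal symmDiff

namespace WTP

variable {k : ℕ}

/-- cumulative weight `a 1 + … + a i` (zero-indexed: `a 0 + … + a i`). -/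
noncomputable def cw (a : Fin k → ℝ) (i : Fin k) : ℝ := ∑ j ∈ Finset.Iic i, a j

/-- Birkhoff sum `S_n f = ∑_{l<n} f ∘ T^l`. -/
noncomputable def birk {X : Type*} (T : X → X) (f : X → ℝ) (n : ℕ) (x : X) : ℝ :=
  ∑ l ∈ Finset.range n, f (T^[l] x)

/-- a (finite) open cover of a topological space. -/
def IsOpenCover {X : Type*} [TopologicalSpace X] (𝒰 : Set (Set X)) : Prop :=
  𝒰.Finite ∧ (∀ U ∈ 𝒰, IsOpen U) ∧ ⋃₀ 𝒰 = Set.univ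

/-- pullback of a cover along a map. -/
def pullCov {X Y : Type*} (g : X → Y) (𝒰 : Set (Set Y)) : Set (Set X) :=
  (fun U => g ⁻¹' U) '' 𝒰

/-- the quantity `exp(−s·n + (1/a₁)·sup_{x∈A} S_{⌈a₁ n⌉} f(x))`, as an element of `ℝ≥0∞`. -/
noncomputable def pterm {X : Type*} (T1 : X → X) (f : X → ℝ) (a1 s : ℝ) (n : ℕ)
    (A : Set X) : ℝ≥0∞ :=
  ENNReal.ofReal (Real.exp (-(s * n) + (1 / a1) * sSup (birk T1 f ⌈a1 * (n : ℝ)⌉₊ '' A)))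

/-- the weighted Bowen ball `B_n^𝐚(x, ε)`. -/
def wBowen {X : Fin k → Type*} [∀ i, MetricSpace (X i)] {X1 : Type*}
    (T : ∀ i, X i → X i) (τ : ∀ i, X1 → X i) (a : Fin k → ℝ)
    (n : ℕ) (x : X1) (ε : ℝ) : Set X1 :=
  {y | ∀ i : Fin k, ∀ j < ⌈cw a i * (n : ℝ)⌉₊,
      dist ((T i)^[j] (τ i x)) ((T i)^[j] (τ i y)) < ε}

section Bowen

variable [NeZero k] {X : Fin k → Type*} [∀ i, MetricSpace (X i)] {X1 : Type*}
  [MeasurableSpace X1]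

/-- `Λ^{𝐚,s}_{N,ε}(Z,f)`. -/
noncomputable def lamBowenN (T1 : X1 → X1) (T : ∀ i, X i → X i) (τ : ∀ i, X1 → X i)
    (a : Fin k → ℝ) (f : X1 → ℝ) (s ε : ℝ) (N : ℕ) (Z : Set X1) : ℝ≥0∞ :=
  ⨅ (D : Set (ℕ × Set X1)) (_ : D.Countable)
    (_ : ∀ p ∈ D, N ≤ p.1 ∧ MeasurableSet p.2 ∧ ∃ x : X1, p.2 ⊆ wBowen T τ a p.1 x ε)
    (_ : Z ⊆ ⋃ p ∈ D, p.2),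
    ∑' p : D, pterm T1 f (a 0) s p.1.1 p.1.2

/-- `Λ^{𝐚,s}_{ε}(Z,f) = lim_{N→∞} Λ^{𝐚,s}_{N,ε}(Z,f)` (an increasing limit). -/
noncomputable def lamBowen (T1 : X1 → X1) (T : ∀ i, X i → X i) (τ : ∀ i, X1 → X i)
    (a : Fin k → ℝ) (f : X1 → ℝ) (s ε : ℝ) (Z : Set X1) : ℝ≥0∞ :=
  ⨆ N : ℕ, lamBowenN T1 T τ a f s ε N Z

/-- `P^𝐚(T₁, Z, ε, f) = inf {s : Λ^{𝐚,s}_ε(Z,f) = 0}`. -/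
noncomputable def PBowenEps (T1 : X1 → X1) (T : ∀ i, X i → X i) (τ : ∀ i, X1 → X i)
    (a : Fin k → ℝ) (Z : Set X1) (f : X1 → ℝ) (ε : ℝ) : EReal :=
  sInf (Real.toEReal '' {s : ℝ | lamBowen T1 T τ a f s ε Z = 0})

/-- the 𝐚-weighted topological pressure `P^𝐚(T₁, Z, f) = lim_{ε→0} P^𝐚(T₁, Z, ε, f)`
(an increasing limit as `ε` decreases to `0`). -/
noncomputable def PBowen (T1 : X1 → X1) (T : ∀ i, X i → X i) (τ : ∀ i, X1 → X i)
    (a : Fin k → ℝ) (Z : Set X1) (f : X1 → ℝ) : EReal :=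
  ⨆ ε : {e : ℝ // 0 < e}, PBowenEps T1 T τ a Z f ε.1

/-- `W^{𝐚,s}_{N,ε}(Z,f)`. -/
noncomputable def wBowenWN (T1 : X1 → X1) (T : ∀ i, X i → X i) (τ : ∀ i, X1 → X i)
    (a : Fin k → ℝ) (f : X1 → ℝ) (s ε : ℝ) (N : ℕ) (Z : Set X1) : ℝ≥0∞ :=
  ⨅ (D : Set (ℕ × Set X1 × ℝ≥0∞)) (_ : D.Countable)
    (_ : ∀ p ∈ D, N ≤ p.1 ∧ MeasurableSet p.2.1 ∧ 0 < p.2.2 ∧ p.2.2 ≠ ⊤ ∧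
        ∃ x : X1, p.2.1 ⊆ wBowen T τ a p.1 x ε)
    (_ : ∀ z ∈ Z, 1 ≤ ∑' p : D, (p.1.2.1).indicator (fun _ => p.1.2.2) z),
    ∑' p : D, p.1.2.2 * pterm T1 f (a 0) s p.1.1 p.1.2.1

/-- `W^{𝐚,s}_{ε}(Z,f)`. -/
noncomputable def wBowenW (T1 : X1 → X1) (T : ∀ i, X i → X i) (τ : ∀ i, X1 → X i)
    (a : Fin k → ℝ) (f : X1 → ℝ) (s ε : ℝ) (Z : Set X1) : ℝ≥0∞ :=
  ⨆ N : ℕ, wBowenWN T1 T τ a f s ε N Z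

/-- `P_W^𝐚(T₁, Z, ε, f)`. -/
noncomputable def PWBowenEps (T1 : X1 → X1) (T : ∀ i, X i → X i) (τ : ∀ i, X1 → X i)
    (a : Fin k → ℝ) (Z : Set X1) (f : X1 → ℝ) (ε : ℝ) : EReal :=
  sInf (Real.toEReal '' {s : ℝ | wBowenW T1 T τ a f s ε Z = 0})

/-- the average 𝐚-weighted topological pressure `P_W^𝐚(T₁, Z, f)`. -/
noncomputable def PWBowen (T1 : X1 → X1) (T : ∀ i, X i → X i) (τ : ∀ i, X1 → X i)
    (a : Fin k → ℝ) (Z : Set X1) (f : X1 → ℝ) : EReal :=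
  ⨆ ε : {e : ℝ // 0 < e}, PWBowenEps T1 T τ a Z f ε.1

end Bowen

section Local

variable [NeZero k] {X1 : Type*} [MeasurableSpace X1]

/-- the cover `⋁_{i=1}^k (τ_{i-1}^{-1} 𝒰_i)_0^{⌈(a_1+…+a_i) n⌉ - 1}` on the first space, where
`𝒱 i` is the pulled back cover `τ_{i-1}^{-1} 𝒰_i`. -/
def jointFiber (T1 : X1 → X1) (a : Fin k → ℝ) (𝒱 : Fin k → Set (Set X1)) (n : ℕ) :
    Set (Set X1) :=
  {A | ∃ V : Fin k → ℕ → Set X1,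
      (∀ i, ∀ l < ⌈cw a i * (n : ℝ)⌉₊, V i l ∈ 𝒱 i) ∧
      A = ⋂ i : Fin k, ⋂ l ∈ Finset.range ⌈cw a i * (n : ℝ)⌉₊, (T1^[l]) ⁻¹' V i l}

/-- `Λ^{𝐚,s}_{N,{𝒰_i}}(Z,f)`. -/
noncomputable def lamLocN (T1 : X1 → X1) (a : Fin k → ℝ) (𝒱 : Fin k → Set (Set X1))
    (f : X1 → ℝ) (s : ℝ) (N : ℕ) (Z : Set X1) : ℝ≥0∞ :=
  ⨅ (D : Set (ℕ × Set X1)) (_ : D.Countable)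
    (_ : ∀ p ∈ D, N ≤ p.1 ∧ MeasurableSet p.2 ∧ ∃ A ∈ jointFiber T1 a 𝒱 p.1, p.2 ⊆ A)
    (_ : Z ⊆ ⋃ p ∈ D, p.2),
    ∑' p : D, pterm T1 f (a 0) s p.1.1 p.1.2

/-- `Λ^{𝐚,s}_{{𝒰_i}}(Z,f)`. -/
noncomputable def lamLoc (T1 : X1 → X1) (a : Fin k → ℝ) (𝒱 : Fin k → Set (Set X1))
    (f : X1 → ℝ) (s : ℝ) (Z : Set X1) : ℝ≥0∞ :=
  ⨆ N : ℕ, lamLocN T1 a 𝒱 f s N Z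

/-- the local 𝐚-weighted topological pressure `P^𝐚(T₁, Z, {𝒰_i}, f)`, expressed through the
pulled-back covers `𝒱 i = τ_{i-1}^{-1} 𝒰_i`. -/
noncomputable def PLoc (T1 : X1 → X1) (a : Fin k → ℝ) (𝒱 : Fin k → Set (Set X1))
    (Z : Set X1) (f : X1 → ℝ) : EReal :=
  sInf (Real.toEReal '' {s : ℝ | lamLoc T1 a 𝒱 f s Z = 0})

/-- `W^{𝐚,s}_{N,{𝒰_i}}(Z,f)`. -/
noncomputable def wLocN (T1 : X1 → X1) (a : Fin k → ℝ) (𝒱 : Fin k → Set (Set X1))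
    (f : X1 → ℝ) (s : ℝ) (N : ℕ) (Z : Set X1) : ℝ≥0∞ :=
  ⨅ (D : Set (ℕ × Set X1 × ℝ≥0∞)) (_ : D.Countable)
    (_ : ∀ p ∈ D, N ≤ p.1 ∧ MeasurableSet p.2.1 ∧ 0 < p.2.2 ∧ p.2.2 ≠ ⊤ ∧
        ∃ A ∈ jointFiber T1 a 𝒱 p.1, p.2.1 ⊆ A)
    (_ : ∀ z ∈ Z, 1 ≤ ∑' p : D, (p.1.2.1).indicator (fun _ => p.1.2.2) z),
    ∑' p : D, p.1.2.2 * pterm T1 f (a 0) s p.1.1 p.1.2.1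

/-- `W^{𝐚,s}_{{𝒰_i}}(Z,f)`. -/
noncomputable def wLoc (T1 : X1 → X1) (a : Fin k → ℝ) (𝒱 : Fin k → Set (Set X1))
    (f : X1 → ℝ) (s : ℝ) (Z : Set X1) : ℝ≥0∞ :=
  ⨆ N : ℕ, wLocN T1 a 𝒱 f s N Z

/-- the local average 𝐚-weighted topological pressure `P_W^𝐚(T₁, Z, {𝒰_i}, f)`. -/
noncomputable def PWLoc (T1 : X1 → X1) (a : Fin k → ℝ) (𝒱 : Fin k → Set (Set X1))
    (Z : Set X1) (f : X1 → ℝ) : EReal :=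
  sInf (Real.toEReal '' {s : ℝ | wLoc T1 a 𝒱 f s Z = 0})

end Local

/-- iterated join `(𝒰)_0^{n-1} = ⋁_{l=0}^{n-1} T^{-l} 𝒰` of a cover. -/
def covJoinT {X : Type*} (T : X → X) (𝒰 : Set (Set X)) (n : ℕ) : Set (Set X) :=
  {A | ∃ u : ℕ → Set X, (∀ l < n, u l ∈ 𝒰) ∧
      A = ⋂ l ∈ Finset.range n, (T^[l]) ⁻¹' u l}

/-- the join `⋁_{j=i}^{k} 𝒱 j` of covers of a single space (in applications
`𝒱 j = τ_{j-1}^{-1} 𝒰_j`). -/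
def joinFrom {X1 : Type*} (𝒱 : Fin k → Set (Set X1)) (i : Fin k) : Set (Set X1) :=
  {A | ∃ V : Fin k → Set X1, (∀ j, i ≤ j → V j ∈ 𝒱 j) ∧ A = ⋂ j ∈ Finset.Ici i, V j}

/-- a finite measurable partition (indexed). -/
def IsPart {X : Type*} [MeasurableSpace X] {ι : Type*} (β : ι → Set X) : Prop :=
  (∀ i, MeasurableSet (β i)) ∧ (∀ i j, i ≠ j → Disjoint (β i) (β j)) ∧ ⋃ i, β i = Set.univ

/-- the static entropy `H_μ(β) = -∑ μ(B) log μ(B)` of a finite (indexed) partition. -/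
noncomputable def entH {X : Type*} [MeasurableSpace X] {ι : Type*} [Fintype ι]
    (μ : Measure X) (β : ι → Set X) : ℝ :=
  ∑ i, Real.negMulLog (μ (β i)).toReal

/-- the dynamical join `⋁_{l=0}^{n-1} T^{-l} β` of a partition. -/
def dynJoin {X : Type*} (T : X → X) {ι : Type*} (β : ι → Set X) (n : ℕ) :
    (Fin n → ι) → Set X :=
  fun c => ⋂ l : Fin n, (T^[(l : ℕ)]) ⁻¹' β (c l)

/-- the measure-theoretic entropy `h_μ(T, β) = lim_n (1/n) H_μ(⋁_{l<n} T^{-l}β)` of `T`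
relative to a finite partition. -/
noncomputable def hPart {X : Type*} [MeasurableSpace X] {ι : Type*} [Fintype ι]
    (μ : Measure X) (T : X → X) (β : ι → Set X) : EReal :=
  Filter.liminf (fun n : ℕ => ((entH μ (dynJoin T β n) / n : ℝ) : EReal)) Filter.atTop

/-- the Kolmogorov–Sinai entropy `h_μ(T)`. -/
noncomputable def hKS {X : Type*} [MeasurableSpace X] (μ : Measure X) (T : X → X) : EReal :=
  ⨆ p : (Σ m : ℕ, {β : Fin m → Set X // IsPart β}), hPart μ T p.2.1

/-- `H_μ(𝒰) = inf {H_μ(β) : β a finite measurable partition refining 𝒰}`. -/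
noncomputable def covH {X : Type*} [MeasurableSpace X] (μ : Measure X)
    (𝒰 : Set (Set X)) : ℝ :=
  sInf {h : ℝ | ∃ (m : ℕ) (β : Fin m → Set X), IsPart β ∧
      (∀ i, ∃ U ∈ 𝒰, β i ⊆ U) ∧ h = entH μ β}

/-- the local measure-theoretic entropy `h_μ(T, 𝒰) = lim_n (1/n) H_μ((𝒰)_0^{n-1})` of `T`
relative to an open cover. -/
noncomputable def hCov {X : Type*} [MeasurableSpace X] (μ : Measure X) (T : X → X)
    (𝒰 : Set (Set X)) : EReal :=
  Filter.liminf (fun n : ℕ => ((covH μ (covJoinT T 𝒰 n) / n : ℝ) : EReal)) Filter.atTop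

/-- `h⁺_μ(T,𝒰) = inf {h_μ(T,β) : β a finite measurable partition refining 𝒰}`. -/
noncomputable def hCovPlus {X : Type*} [MeasurableSpace X] (μ : Measure X) (T : X → X)
    (𝒰 : Set (Set X)) : EReal :=
  ⨅ p : (Σ m : ℕ, {β : Fin m → Set X // IsPart β ∧ ∀ i, ∃ U ∈ 𝒰, β i ⊆ U}),
    hPart μ T p.2.1

/-- the join `⋁_{j=i}^{k} γ j` of partitions of a single space (in applications
`γ j = τ_{j-1}^{-1} α_j`). -/
def partJoinFrom {X1 : Type*} {ι : Fin k → Type*} (γ : ∀ j, ι j → Set X1) (i : Fin k) :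
    (∀ j : {j : Fin k // i ≤ j}, ι j) → Set X1 :=
  fun c => ⋂ j : {j : Fin k // i ≤ j}, γ j (c j)

/-- the partition `⋁_{i=1}^k (γ_i)_0^{⌈(a_1+…+a_i)N⌉-1}` on the first space, where
`γ i = τ_{i-1}^{-1} α_i`. -/
def bigPartJoin {X1 : Type*} (T1 : X1 → X1) (a : Fin k → ℝ) {ι : Fin k → Type*}
    (γ : ∀ i, ι i → Set X1) (N : ℕ) :
    (∀ i : Fin k, Fin ⌈cw a i * (N : ℝ)⌉₊ → ι i) → Set X1 :=
  fun c => ⋂ i : Fin k, ⋂ l : Fin ⌈cw a i * (N : ℝ)⌉₊, (T1^[(l : ℕ)]) ⁻¹' γ i (c i l)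

/-- conditional entropy `H_μ(γ|β) = H_μ(γ ∨ β) - H_μ(β)`. -/
noncomputable def condEnt {X : Type*} [MeasurableSpace X] {ι κ : Type*} [Fintype ι] [Fintype κ]
    (μ : Measure X) (γ : ι → Set X) (β : κ → Set X) : ℝ :=
  entH μ (fun p : ι × κ => γ p.1 ∩ β p.2) - entH μ β

/-- the oscillation `w_f(⋁_{i=1}^k τ_{i-1}^{-1} 𝒰_i)` of `f` on the joined cover, where
`𝒱 i = τ_{i-1}^{-1} 𝒰_i`. -/
noncomputable def wfJoin {X1 : Type*} (f : X1 → ℝ) (𝒱 : Fin k → Set (Set X1)) : ℝ :=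
  sSup {d : ℝ | ∃ V : Fin k → Set X1, (∀ i, V i ∈ 𝒱 i) ∧
      ∃ x ∈ ⋂ i, V i, ∃ y ∈ ⋂ i, V i, d = |f x - f y|}

/-- the topological support of a measure. -/
def msupp {X : Type*} [TopologicalSpace X] [MeasurableSpace X] (μ : Measure X) : Set X :=
  {x | ∀ U : Set X, IsOpen U → x ∈ U → 0 < μ U}

/-- log-sum inequality. -/
lemma logsum {ι : Type*} (s : Finset ι) (a b : ι → ℝ)
    (ha : ∀ i ∈ s, 0 ≤ a i) (hab : ∀ i ∈ s, a i ≤ b i) :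
    ∑ i ∈ s, (a i * Real.log (b i) - a i * Real.log (a i))
      ≤ (∑ i ∈ s, a i) * Real.log (∑ i ∈ s, b i)
        - (∑ i ∈ s, a i) * Real.log (∑ i ∈ s, a i) := by
  classical
  set s' : Finset ι := s.filter (fun i => 0 < a i) with hs'
  have hsub : s' ⊆ s := Finset.filter_subset _ _
  have hA : ∑ i ∈ s', a i = ∑ i ∈ s, a i := by
    refine Finset.sum_subset hsub ?_
    intro i hi hni
    have := ha i hi
    have : a i = 0 := le_antisymm (by by_contra h; exact hni (Finset.mem_filter.2 ⟨hi, lt_of_le_of_ne this (by intro he; exact h (le_of_eq he.symm))⟩)) this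
    exact this
  have hLHS : ∑ i ∈ s, (a i * Real.log (b i) - a i * Real.log (a i))
      = ∑ i ∈ s', (a i * Real.log (b i) - a i * Real.log (a i)) := by
    refine (Finset.sum_subset hsub ?_).symm
    intro i hi hni
    have hai : a i = 0 := by
      rcases lt_or_eq_of_le (ha i hi) with h | h
      · exact absurd (Finset.mem_filter.2 ⟨hi, h⟩) hni
      · exact h.symm
    simp [hai]
  rcases Finset.eq_empty_or_nonempty s' with he | hne
  · have hA0 : ∑ i ∈ s, a i = 0 := by rw [← hA, he]; simp
    rw [hLHS, he, hA0]; simp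
  · have hApos : 0 < ∑ i ∈ s', a i :=
      Finset.sum_pos (fun i hi => (Finset.mem_filter.1 hi).2) hne
    have haipos : ∀ i ∈ s', 0 < a i := fun i hi => (Finset.mem_filter.1 hi).2
    have hbipos : ∀ i ∈ s', 0 < b i := fun i hi =>
      lt_of_lt_of_le (haipos i hi) (hab i (hsub hi))
    set A := ∑ i ∈ s', a i with hAd
    set B' := ∑ i ∈ s', b i with hB'd
    have hB'pos : 0 < B' := Finset.sum_pos hbipos hne
    have hB'B : B' ≤ ∑ i ∈ s, b i := by
      refine Finset.sum_le_sum_of_subset_of_nonneg hsub ?_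
      intro i hi _; exact le_trans (ha i hi) (hab i hi)
    have hBpos : 0 < ∑ i ∈ s, b i := lt_of_lt_of_le hB'pos hB'B
    -- Jensen
    have hjensen : ∑ i ∈ s', (a i / A) * Real.log (b i / a i)
        ≤ Real.log (B' / A) := by
      have hconc : ConcaveOn ℝ (Set.Ioi (0:ℝ)) Real.log := strictConcaveOn_log_Ioi.concaveOn
      have h₁ : ∑ i ∈ s', a i / A = 1 := by
        rw [← Finset.sum_div]; field_simp; exact hAd.symm
      have hmem : ∀ i ∈ s', b i / a i ∈ Set.Ioi (0:ℝ) := fun i hi =>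
        div_pos (hbipos i hi) (haipos i hi)
      have := hconc.le_map_sum (fun i hi => (div_pos (haipos i hi) hApos).le) h₁ hmem
        (p := fun i => b i / a i)
      simp only [smul_eq_mul] at this
      have hsum : ∑ i ∈ s', (a i / A) * (b i / a i) = B' / A := by
        rw [Finset.sum_congr rfl (fun i hi => ?_), ← Finset.sum_div]
        rw [div_mul_eq_mul_div, mul_comm (a i) (b i / a i),
          div_mul_cancel₀ _ (ne_of_gt (haipos i hi))]
      rw [hsum] at this
      exact this
    have key : ∑ i ∈ s', (a i * Real.log (b i) - a i * Real.log (a i))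
        ≤ A * Real.log B' - A * Real.log A := by
      have : ∑ i ∈ s', (a i * Real.log (b i) - a i * Real.log (a i))
          = A * ∑ i ∈ s', (a i / A) * Real.log (b i / a i) := by
        rw [Finset.mul_sum]
        refine Finset.sum_congr rfl (fun i hi => ?_)
        rw [Real.log_div (ne_of_gt (hbipos i hi)) (ne_of_gt (haipos i hi))]
        field_simp
      rw [this]
      calc A * ∑ i ∈ s', (a i / A) * Real.log (b i / a i)
          ≤ A * Real.log (B' / A) := by
            exact mul_le_mul_of_nonneg_left hjensen hApos.le
        _ = A * Real.log B' - A * Real.log A := by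
            rw [Real.log_div (ne_of_gt hB'pos) (ne_of_gt hApos)]; ring
    rw [hLHS, ← hA]
    refine le_trans key ?_
    have : A * Real.log B' ≤ A * Real.log (∑ i ∈ s, b i) :=
      mul_le_mul_of_nonneg_left (Real.log_le_log hB'pos hB'B) hApos.le
    linarith


section Ent
variable {Y : Type*} [MeasurableSpace Y] (μ : Measure Y) [IsProbabilityMeasure μ]

lemma negMulLog_sum_le {ι : Type*} (s : Finset ι) (p : ι → ℝ) (hp : ∀ i ∈ s, 0 ≤ p i) :
    Real.negMulLog (∑ i ∈ s, p i) ≤ ∑ i ∈ s, Real.negMulLog (p i) := by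
  have h1 : Real.negMulLog (∑ i ∈ s, p i)
      = ∑ i ∈ s, -(p i * Real.log (∑ j ∈ s, p j)) := by
    rw [Real.negMulLog, neg_mul, Finset.sum_neg_distrib, ← Finset.sum_mul]
  rw [h1]
  refine Finset.sum_le_sum (fun i hi => ?_)
  rcases eq_or_lt_of_le (hp i hi) with h | h
  · simp [← h]
  · rw [Real.negMulLog, neg_mul, neg_le_neg_iff]
    exact mul_le_mul_of_nonneg_left
      (Real.log_le_log h (Finset.single_le_sum hp hi)) (hp i hi)

lemma entH_nonneg {ι : Type*} [Fintype ι] (β : ι → Set Y) : 0 ≤ entH μ β := by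
  refine Finset.sum_nonneg fun i _ => Real.negMulLog_nonneg ENNReal.toReal_nonneg ?_
  have := prob_le_one (μ := μ) (s := β i)
  simpa using ENNReal.toReal_mono (by simp) this

/-- decomposition of the measure of `W` along a partition. -/
lemma meas_part_inter {ι : Type*} [Fintype ι] {ξ : ι → Set Y} (hξ : IsPart ξ)
    (W : Set Y) (hW : MeasurableSet W) :
    (μ W).toReal = ∑ i, (μ (ξ i ∩ W)).toReal := by
  classical
  have hset : W = ⋃ i ∈ Finset.univ, (ξ i ∩ W) := by
    simp only [Finset.mem_univ, Set.iUnion_true]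
    rw [← Set.iUnion_inter, hξ.2.2, Set.univ_inter]
  have : μ W = ∑ i, μ (ξ i ∩ W) := by
    conv_lhs => rw [hset]
    exact measure_biUnion_finset
      (fun i _ j _ hij =>
        (hξ.2.1 i j hij).mono Set.inter_subset_left Set.inter_subset_left)
      (fun i _ => (hξ.1 i).inter hW)
  rw [this, ENNReal.toReal_sum (fun i _ => measure_ne_top μ _)]

/-- fibered decomposition of the measure of `W ∩ β' v` along a refining partition. -/
lemma meas_fiber_inter {ι κ : Type*} [Fintype ι] [DecidableEq κ]
    {β : ι → Set Y} (hβ : IsPart β) {β' : κ → Set Y}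
    (hd : ∀ u v, u ≠ v → Disjoint (β' u) (β' v))
    (π : ι → κ) (hπ : ∀ i, β i ⊆ β' (π i)) (W : Set Y) (hW : MeasurableSet W) (v : κ) :
    (μ (W ∩ β' v)).toReal
      = ∑ i ∈ Finset.univ.filter (fun i => π i = v), (μ (W ∩ β i)).toReal := by
  have hset : W ∩ β' v = ⋃ i ∈ Finset.univ.filter (fun i => π i = v), (W ∩ β i) := by
    ext x
    constructor
    · rintro ⟨hxW, hxv⟩
      have hcov : x ∈ ⋃ i, β i := by rw [hβ.2.2]; trivial
      obtain ⟨i, hi⟩ := Set.mem_iUnion.1 hcov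
      have hpi : π i = v := by
        by_contra hne
        exact Set.disjoint_left.1 (hd _ _ hne) (hπ i hi) hxv
      exact Set.mem_biUnion (Finset.mem_filter.2 ⟨Finset.mem_univ i, hpi⟩) ⟨hxW, hi⟩
    · intro hx
      obtain ⟨i, hi, hxW, hxi⟩ := Set.mem_iUnion₂.1 hx
      exact ⟨hxW, (Finset.mem_filter.1 hi).2 ▸ hπ i hxi⟩
  have : μ (W ∩ β' v) = ∑ i ∈ Finset.univ.filter (fun i => π i = v), μ (W ∩ β i) := by
    conv_lhs => rw [hset]
    exact measure_biUnion_finset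
      (fun i _ j _ hij =>
        (hβ.2.1 i j hij).mono Set.inter_subset_right Set.inter_subset_right)
      (fun i _ => hW.inter (hβ.1 i))
  rw [this, ENNReal.toReal_sum (fun i _ => measure_ne_top μ _)]

/-- entropy decreases under coarsening. -/
lemma entH_le_of_ref {ι κ : Type*} [Fintype ι] [Fintype κ]
    {β : ι → Set Y} {β' : κ → Set Y} (hβ : IsPart β) (hβ' : IsPart β')
    (π : ι → κ) (hπ : ∀ i, β i ⊆ β' (π i)) : entH μ β' ≤ entH μ β := by
  classical
  rw [entH, entH,
    ← Finset.sum_fiberwise_of_maps_to (fun i _ => Finset.mem_univ (π i))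
      (fun i => Real.negMulLog (μ (β i)).toReal)]
  refine Finset.sum_le_sum (fun v _ => ?_)
  have hv : (μ (β' v)).toReal
      = ∑ i ∈ Finset.univ.filter (fun i => π i = v), (μ (β i)).toReal := by
    have := meas_fiber_inter μ hβ hβ'.2.1 π hπ Set.univ MeasurableSet.univ v
    simpa using this
  rw [hv]
  exact negMulLog_sum_le _ _ (fun i _ => ENNReal.toReal_nonneg)

lemma isPart_prod {ι κ : Type*} {ξ : ι → Set Y} {A : κ → Set Y}
    (hξ : IsPart ξ) (hA : IsPart A) :
    IsPart (fun p : ι × κ => ξ p.1 ∩ A p.2) := by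
  refine ⟨fun p => (hξ.1 p.1).inter (hA.1 p.2), ?_, ?_⟩
  · rintro ⟨i, u⟩ ⟨j, v⟩ hne
    by_cases hij : i = j
    · subst hij
      have huv : u ≠ v := fun h => hne (by rw [h])
      exact (hA.2.1 u v huv).mono Set.inter_subset_right Set.inter_subset_right
    · exact (hξ.2.1 i j hij).mono Set.inter_subset_left Set.inter_subset_left
  · ext x
    simp only [Set.mem_iUnion, Set.mem_univ, iff_true, Set.mem_inter_iff, Prod.exists]
    have hx1 : x ∈ ⋃ i, ξ i := by rw [hξ.2.2]; trivial
    have hx2 : x ∈ ⋃ u, A u := by rw [hA.2.2]; trivial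
    obtain ⟨i, hi⟩ := Set.mem_iUnion.1 hx1
    obtain ⟨u, hu⟩ := Set.mem_iUnion.1 hx2
    exact ⟨i, u, hi, hu⟩

/-- monotonicity of conditional entropy in the conditioning partition. -/
lemma entH_cond_mono {ι κA κB : Type*} [Fintype ι] [Fintype κA] [Fintype κB]
    {ξ : ι → Set Y} {A : κA → Set Y} {B : κB → Set Y}
    (hξ : IsPart ξ) (hA : IsPart A) (hB : IsPart B)
    (π : κA → κB) (hπ : ∀ u, A u ⊆ B (π u)) :
    entH μ (fun p : ι × κA => ξ p.1 ∩ A p.2) - entH μ A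
      ≤ entH μ (fun p : ι × κB => ξ p.1 ∩ B p.2) - entH μ B := by
  classical
  set r : ι → κA → ℝ := fun i u => (μ (ξ i ∩ A u)).toReal with hr
  set q : κA → ℝ := fun u => (μ (A u)).toReal with hqd
  set P : ι → κB → ℝ := fun i v => (μ (ξ i ∩ B v)).toReal with hP
  set Q : κB → ℝ := fun v => (μ (B v)).toReal with hQd
  have hq : ∀ u, q u = ∑ i, r i u := fun u => meas_part_inter μ hξ (A u) (hA.1 u)
  have hQ : ∀ v, Q v = ∑ u ∈ Finset.univ.filter (fun u => π u = v), q u := by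
    intro v
    have := meas_fiber_inter μ hA hB.2.1 π hπ Set.univ MeasurableSet.univ v
    simpa using this
  have hPf : ∀ i v, P i v = ∑ u ∈ Finset.univ.filter (fun u => π u = v), r i u :=
    fun i v => meas_fiber_inter μ hA hB.2.1 π hπ (ξ i) (hξ.1 i) v
  -- rewrite both sides as double sums of `a log b - a log a`
  have hLHS : entH μ (fun p : ι × κA => ξ p.1 ∩ A p.2) - entH μ A
      = ∑ i, ∑ u, (r i u * Real.log (q u) - r i u * Real.log (r i u)) := by
    rw [entH, entH, Fintype.sum_prod_type]
    rw [Finset.sum_comm, ← Finset.sum_sub_distrib]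
    rw [Finset.sum_comm (γ := ι)]
    refine Finset.sum_congr rfl (fun u _ => ?_)
    have : Real.negMulLog (q u) = ∑ i, -(r i u * Real.log (q u)) := by
      rw [Real.negMulLog, neg_mul, Finset.sum_neg_distrib, ← Finset.sum_mul, ← hq]
    rw [this, ← Finset.sum_sub_distrib]
    refine Finset.sum_congr rfl (fun i _ => ?_)
    rw [Real.negMulLog]
    ring
  have hRHS : entH μ (fun p : ι × κB => ξ p.1 ∩ B p.2) - entH μ B
      = ∑ i, ∑ v, (P i v * Real.log (Q v) - P i v * Real.log (P i v)) := by
    rw [entH, entH, Fintype.sum_prod_type]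
    rw [Finset.sum_comm, ← Finset.sum_sub_distrib]
    rw [Finset.sum_comm (γ := ι)]
    refine Finset.sum_congr rfl (fun v _ => ?_)
    have hQsum : Q v = ∑ i, P i v := meas_part_inter μ hξ (B v) (hB.1 v)
    have : Real.negMulLog (Q v) = ∑ i, -(P i v * Real.log (Q v)) := by
      rw [Real.negMulLog, neg_mul, Finset.sum_neg_distrib, ← Finset.sum_mul, ← hQsum]
    rw [this, ← Finset.sum_sub_distrib]
    refine Finset.sum_congr rfl (fun i _ => ?_)
    rw [Real.negMulLog]
    ring
  rw [hLHS, hRHS]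
  refine Finset.sum_le_sum (fun i _ => ?_)
  rw [← Finset.sum_fiberwise_of_maps_to (fun u _ => Finset.mem_univ (π u))
    (fun u => (r i u * Real.log (q u) - r i u * Real.log (r i u)))]
  refine Finset.sum_le_sum (fun v _ => ?_)
  have := logsum (Finset.univ.filter (fun u => π u = v)) (fun u => r i u) q
    (fun u _ => ENNReal.toReal_nonneg)
    (fun u _ => ENNReal.toReal_mono (measure_ne_top μ _)
      (measure_mono Set.inter_subset_right))
  rw [← hPf, ← hQ] at this
  exact this

end Ent

section CP
variable {Y : Type*} [MeasurableSpace Y] (μ : Measure Y) [IsProbabilityMeasure μ]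
  (T : Y → Y) {k : ℕ} {m : Fin k → ℕ} (γ : ∀ i, Fin (m i) → Set Y)

lemma isPart_pi {J : Type*} [Countable J] {ι : J → Type*}
    {δ : ∀ j, ι j → Set Y} (hδ : ∀ j, IsPart (δ j)) :
    IsPart (fun c : (∀ j, ι j) => ⋂ j, δ j (c j)) := by
  refine ⟨fun c => MeasurableSet.iInter (fun j => (hδ j).1 _), ?_, ?_⟩
  · intro c c' hne
    obtain ⟨j, hj⟩ : ∃ j, c j ≠ c' j := by
      by_contra h; push_neg at h; exact hne (funext h)
    refine Set.disjoint_left.2 fun x hx hx' => ?_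
    exact Set.disjoint_left.1 ((hδ j).2.1 _ _ hj)
      (Set.mem_iInter.1 hx j) (Set.mem_iInter.1 hx' j)
  · ext x
    simp only [Set.mem_iUnion, Set.mem_iInter, Set.mem_univ, iff_true]
    have hall : ∀ j, ∃ t, x ∈ δ j t := by
      intro j
      have h2 := (hδ j).2.2
      rw [Set.eq_univ_iff_forall] at h2
      simpa [Set.mem_iUnion] using h2 x
    choose c hc using hall
    exact ⟨c, hc⟩

lemma isPart_preimage {Z : Type*} [MeasurableSpace Z] {ι : Type*} {β : ι → Set Z}
    (hβ : IsPart β) {f : Y → Z} (hf : Measurable f) : IsPart (fun i => f ⁻¹' β i) := by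
  refine ⟨fun i => hf (hβ.1 i), fun i j hij => (hβ.2.1 i j hij).preimage f, ?_⟩
  rw [← Set.preimage_iUnion, hβ.2.2, Set.preimage_univ]

/-- the coordinate partition over a finite set of (factor,time) pairs. -/
def cp (S : Finset (Fin k × ℕ)) : (∀ p : {p // p ∈ S}, Fin (m p.1.1)) → Set Y :=
  fun c => ⋂ p : {p // p ∈ S}, (T^[p.1.2]) ⁻¹' γ p.1.1 (c p)

noncomputable def HH (S : Finset (Fin k × ℕ)) : ℝ := entH μ (cp T γ S)

variable (hT : Measurable T) (hγ : ∀ i, IsPart (γ i))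

include hT hγ in
lemma isPart_cp (S : Finset (Fin k × ℕ)) : IsPart (cp T γ S) :=
  isPart_pi (δ := fun (p : {p // p ∈ S}) t => (T^[p.1.2]) ⁻¹' γ p.1.1 t)
    (fun p => isPart_preimage (hγ p.1.1) (hT.iterate p.1.2))

lemma cp_subset_of_subset {S S' : Finset (Fin k × ℕ)} (h : S ⊆ S')
    (c : ∀ p : {p // p ∈ S'}, Fin (m p.1.1)) :
    cp T γ S' c ⊆ cp T γ S (fun p => c ⟨p.1, h p.2⟩) := fun x hx =>
  Set.mem_iInter.2 fun p => Set.mem_iInter.1 hx ⟨p.1, h p.2⟩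

lemma HH_nonneg (S : Finset (Fin k × ℕ)) : 0 ≤ HH μ T γ S := entH_nonneg μ _

include hT hγ in
lemma HH_mono {S S' : Finset (Fin k × ℕ)} (h : S ⊆ S') :
    HH μ T γ S ≤ HH μ T γ S' :=
  entH_le_of_ref μ (isPart_cp T γ hT hγ S') (isPart_cp T γ hT hγ S)
    (fun c p => c ⟨p.1, h p.2⟩) (fun c => cp_subset_of_subset T γ h c)

lemma HH_empty : HH μ T γ ∅ = 0 := by
  haveI : IsEmpty {p : Fin k × ℕ // p ∈ (∅ : Finset (Fin k × ℕ))} :=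
    ⟨by rintro ⟨p, hp⟩; simp at hp⟩
  rw [HH, entH]
  refine Finset.sum_eq_zero fun c _ => ?_
  rw [show cp T γ ∅ c = Set.univ from Set.iInter_of_empty _]
  simp

include hT hγ in
lemma entH_join_union (S S₂ : Finset (Fin k × ℕ)) :
    entH μ (fun pc : (∀ p : {p // p ∈ S}, Fin (m p.1.1)) ×
        (∀ p : {p // p ∈ S₂}, Fin (m p.1.1)) =>
      cp T γ S pc.1 ∩ cp T γ S₂ pc.2) = HH μ T γ (S ∪ S₂) := by
  classical
  have hP1 := isPart_cp T γ hT hγ S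
  have hP2 := isPart_cp T γ hT hγ S₂
  have hPU := isPart_cp T γ hT hγ (S ∪ S₂)
  refine le_antisymm ?_ ?_
  · refine entH_le_of_ref μ hPU (isPart_prod hP1 hP2)
      (fun c => ⟨fun p => c ⟨p.1, Finset.mem_union_left _ p.2⟩,
                 fun p => c ⟨p.1, Finset.mem_union_right _ p.2⟩⟩) ?_
    intro c
    exact Set.subset_inter (cp_subset_of_subset T γ Finset.subset_union_left c)
      (cp_subset_of_subset T γ Finset.subset_union_right c)
  · refine entH_le_of_ref μ (isPart_prod hP1 hP2) hPU
      (fun pc => fun p => if h : p.1 ∈ S then pc.1 ⟨p.1, h⟩ else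
        pc.2 ⟨p.1, by rcases Finset.mem_union.1 p.2 with h' | h'
                      · exact absurd h' h
                      · exact h'⟩) ?_
    rintro ⟨c1, c2⟩ x hx
    refine Set.mem_iInter.2 fun p => ?_
    by_cases h : p.1 ∈ S
    · simpa only [dif_pos h] using Set.mem_iInter.1 hx.1 ⟨p.1, h⟩
    · have h2 : p.1 ∈ S₂ := by
        rcases Finset.mem_union.1 p.2 with h' | h'
        · exact absurd h' h
        · exact h'
      simpa only [dif_neg h] using Set.mem_iInter.1 hx.2 ⟨p.1, h2⟩

include hT hγ in
/-- C1: conditioning on a finer partition decreases conditional entropy. -/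
lemma HH_cond_mono (S : Finset (Fin k × ℕ)) {S' S'' : Finset (Fin k × ℕ)}
    (h : S' ⊆ S'') :
    HH μ T γ (S ∪ S'') - HH μ T γ S'' ≤ HH μ T γ (S ∪ S') - HH μ T γ S' := by
  have := entH_cond_mono μ (ξ := cp T γ S) (A := cp T γ S'') (B := cp T γ S')
    (isPart_cp T γ hT hγ S) (isPart_cp T γ hT hγ S'') (isPart_cp T γ hT hγ S')
    (fun c p => c ⟨p.1, h p.2⟩) (fun c => cp_subset_of_subset T γ h c)
  rwa [entH_join_union μ T γ hT hγ S S'', entH_join_union μ T γ hT hγ S S'] at this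

include hT hγ in
lemma HH_union_le (S S' : Finset (Fin k × ℕ)) :
    HH μ T γ (S ∪ S') ≤ HH μ T γ S + HH μ T γ S' := by
  have h := HH_cond_mono μ T γ hT hγ S (Finset.empty_subset S')
  rw [Finset.union_empty, HH_empty] at h
  linarith

end CP

/-- time shift on coordinates. -/
def shf {k : ℕ} (n : ℕ) (p : Fin k × ℕ) : Fin k × ℕ := (p.1, p.2 + n)

lemma mem_shf_image {k n : ℕ} {S : Finset (Fin k × ℕ)} {p : Fin k × ℕ} :
    p ∈ S.image (shf n) ↔ n ≤ p.2 ∧ (p.1, p.2 - n) ∈ S := by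
  constructor
  · intro hp
    obtain ⟨q, hq, he⟩ := Finset.mem_image.1 hp
    constructor
    · rw [← he]; simp [shf]
    · have : (p.1, p.2 - n) = q := by rw [← he]; simp [shf]
      rw [this]; exact hq
  · rintro ⟨h1, h2⟩
    refine Finset.mem_image.2 ⟨(p.1, p.2 - n), h2, ?_⟩
    simp only [shf]
    rw [Prod.mk.injEq]
    exact ⟨rfl, Nat.sub_add_cancel h1⟩

section CP2
variable {Y : Type*} [MeasurableSpace Y] (μ : Measure Y) [IsProbabilityMeasure μ]
  (T : Y → Y) {k : ℕ} {m : Fin k → ℕ} (γ : ∀ i, Fin (m i) → Set Y)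
  (hT : Measurable T) (hγ : ∀ i, IsPart (γ i))
  (hμT : ∀ s : Set Y, MeasurableSet s → μ (T ⁻¹' s) = μ s)

include hT hμT in
lemma meas_preimage_iterate (n : ℕ) {s : Set Y} (hs : MeasurableSet s) :
    μ ((T^[n]) ⁻¹' s) = μ s := by
  induction n with
  | zero => simp
  | succ n ih =>
    rw [Function.iterate_succ, Set.preimage_comp, hμT _ ((hT.iterate n) hs)]
    exact ih

include hT hγ hμT in
lemma HH_shift (S : Finset (Fin k × ℕ)) (n : ℕ) :
    HH μ T γ (S.image (shf n)) = HH μ T γ S := by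
  classical
  have hmem : ∀ p : Fin k × ℕ, p ∈ S → shf n p ∈ S.image (shf n) :=
    fun p hp => Finset.mem_image_of_mem _ hp
  set β : (∀ p : {p // p ∈ S}, Fin (m p.1.1)) → Set Y :=
    fun c => (T^[n]) ⁻¹' cp T γ S c with hβdef
  have hβpart : IsPart β :=
    isPart_preimage (isPart_cp T γ hT hγ S) (hT.iterate n)
  have h1 : entH μ (cp T γ (S.image (shf n))) = entH μ β := by
    refine le_antisymm ?_ ?_
    · refine entH_le_of_ref μ hβpart (isPart_cp T γ hT hγ _)
        (fun c => fun p' => c ⟨(p'.1.1, p'.1.2 - n), (mem_shf_image.1 p'.2).2⟩) ?_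
      intro c x hx
      refine Set.mem_iInter.2 fun p' => ?_
      have hp' := mem_shf_image.1 p'.2
      have h := Set.mem_iInter.1 (Set.mem_preimage.1 hx)
        ⟨(p'.1.1, p'.1.2 - n), hp'.2⟩
      rw [Set.mem_preimage] at h
      rw [← Function.iterate_add_apply] at h
      rw [Nat.sub_add_cancel hp'.1] at h
      rw [Set.mem_preimage]
      exact h
    · refine entH_le_of_ref μ (isPart_cp T γ hT hγ _) hβpart
        (fun c' => fun p => c' ⟨shf n p.1, hmem _ p.2⟩) ?_
      intro c' x hx
      refine Set.mem_preimage.2 (Set.mem_iInter.2 fun p => ?_)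
      have h := Set.mem_iInter.1 hx ⟨shf n p.1, hmem _ p.2⟩
      rw [Set.mem_preimage] at h ⊢
      simp only [shf] at h
      rw [← Function.iterate_add_apply]
      exact h
  have h2 : entH μ β = entH μ (cp T γ S) := by
    refine Finset.sum_congr rfl fun c _ => ?_
    rw [hβdef]
    rw [meas_preimage_iterate μ T hT hμT n ((isPart_cp T γ hT hγ S).1 c)]
  rw [HH, h1, h2, HH]

end CP2

section FinsetLayer
variable {k : ℕ}

/-- the block `{j} × [0,n)`. -/
def blkS (j : Fin k) (n : ℕ) : Finset (Fin k × ℕ) := {j} ×ˢ Finset.range n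

/-- the region `{(j,l) : t ≤ j, l < n}`. -/
def SgeS (t : ℕ) (n : ℕ) : Finset (Fin k × ℕ) :=
  (Finset.univ.filter (fun j : Fin k => t ≤ (j : ℕ))) ×ˢ Finset.range n

lemma mem_blkS {j : Fin k} {n : ℕ} {p : Fin k × ℕ} :
    p ∈ blkS j n ↔ p.1 = j ∧ p.2 < n := by
  rw [blkS, Finset.mem_product, Finset.mem_singleton, Finset.mem_range]

lemma mem_SgeS {t n : ℕ} {p : Fin k × ℕ} :
    p ∈ SgeS t n ↔ t ≤ (p.1 : ℕ) ∧ p.2 < n := by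
  rw [SgeS, Finset.mem_product, Finset.mem_filter, Finset.mem_range]
  simp

lemma SgeS_split {t : ℕ} (ht : t < k) (n : ℕ) :
    SgeS t n = blkS (⟨t, ht⟩ : Fin k) n ∪ SgeS (t+1) n := by
  ext ⟨j, l⟩
  simp only [mem_SgeS, Finset.mem_union, mem_blkS, Fin.ext_iff]
  constructor
  · rintro ⟨hj, hl⟩
    rcases eq_or_lt_of_le hj with h | h
    · exact Or.inl ⟨h.symm, hl⟩
    · exact Or.inr ⟨h, hl⟩
  · rintro (⟨hj, hl⟩ | ⟨hj, hl⟩)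
    · exact ⟨le_of_eq hj.symm, hl⟩
    · exact ⟨by omega, hl⟩

lemma SgeS_of_ge {t : ℕ} (ht : k ≤ t) (n : ℕ) : SgeS (k := k) t n = ∅ := by
  ext ⟨j, l⟩
  simp only [mem_SgeS, Finset.notMem_empty, iff_false, not_and]
  intro hj
  exact absurd (lt_of_lt_of_le j.isLt ht) (not_lt.2 hj)

lemma SgeS_zero (t : ℕ) : SgeS (k := k) t 0 = ∅ := by
  ext p; simp [mem_SgeS]

lemma SgeS_mono (t : ℕ) {n n' : ℕ} (h : n ≤ n') : SgeS (k := k) t n ⊆ SgeS t n' := by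
  intro p hp
  rw [mem_SgeS] at hp ⊢
  exact ⟨hp.1, lt_of_lt_of_le hp.2 h⟩

lemma SgeS_anti {t t' : ℕ} (h : t ≤ t') (n : ℕ) : SgeS (k := k) t' n ⊆ SgeS t n := by
  intro p hp
  rw [mem_SgeS] at hp ⊢
  exact ⟨le_trans h hp.1, hp.2⟩

lemma SgeS_add (t n₁ n₂ : ℕ) :
    SgeS (k := k) t (n₁ + n₂) = SgeS t n₁ ∪ (SgeS t n₂).image (shf n₁) := by
  ext ⟨j, l⟩
  simp only [mem_SgeS, Finset.mem_union, mem_shf_image]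
  constructor
  · rintro ⟨hj, hl⟩
    by_cases h : l < n₁
    · exact Or.inl ⟨hj, h⟩
    · exact Or.inr ⟨by omega, hj, by omega⟩
  · rintro (⟨hj, hl⟩ | ⟨hn, hj, hl⟩)
    · exact ⟨hj, by omega⟩
    · exact ⟨hj, by omega⟩

lemma blkS_add (j : Fin k) (n₁ n₂ : ℕ) :
    blkS j (n₁ + n₂) = blkS j n₁ ∪ (blkS j n₂).image (shf n₁) := by
  ext ⟨i, l⟩
  simp only [mem_blkS, Finset.mem_union, mem_shf_image]
  constructor
  · rintro ⟨hi, hl⟩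
    by_cases h : l < n₁
    · exact Or.inl ⟨hi, h⟩
    · exact Or.inr ⟨by omega, hi, by omega⟩
  · rintro (⟨hi, hl⟩ | ⟨hn, hi, hl⟩)
    · exact ⟨hi, by omega⟩
    · exact ⟨hi, by omega⟩

lemma blkS_zero (j : Fin k) : blkS j 0 = ∅ := by
  ext p; simp [mem_blkS]

lemma shf_image_SgeS_subset {t M d n : ℕ} (h : d + M ≤ n) :
    (SgeS (k := k) t M).image (shf d) ⊆ SgeS t n := by
  intro p hp
  rw [mem_shf_image] at hp
  rw [mem_SgeS]
  have hd := hp.1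
  have hj := (mem_SgeS.1 hp.2).1
  have hl := (mem_SgeS.1 hp.2).2
  exact ⟨hj, by omega⟩

end FinsetLayer

section Dyn
variable {Y : Type*} [MeasurableSpace Y] (μ : Measure Y) [IsProbabilityMeasure μ]
  (T : Y → Y) {k : ℕ} {m : Fin k → ℕ} (γ : ∀ i, Fin (m i) → Set Y)
  (hT : Measurable T) (hγ : ∀ i, IsPart (γ i))
  (hμT : ∀ s : Set Y, MeasurableSet s → μ (T ⁻¹' s) = μ s)

/-- the entropy rate of the partitions with indices `≥ t`. -/
noncomputable def hsq (t : ℕ) : ℝ :=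
  ⨅ n : ℕ, HH μ T γ (SgeS t (n+1)) / (n+1)

lemma hsq_bdd (t : ℕ) :
    BddBelow (Set.range fun n : ℕ => HH μ T γ (SgeS t (n+1)) / (n+1)) := by
  refine ⟨0, ?_⟩
  rintro x ⟨n, rfl⟩
  exact div_nonneg (HH_nonneg μ T γ _) (by positivity)

lemma hsq_nonneg (t : ℕ) : 0 ≤ hsq μ T γ t :=
  le_ciInf fun n => div_nonneg (HH_nonneg μ T γ _) (by positivity)

lemma hsq_le (t : ℕ) {n : ℕ} (hn : 0 < n) :
    hsq μ T γ t ≤ HH μ T γ (SgeS t n) / n := by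
  have h := ciInf_le (hsq_bdd μ T γ t) (n - 1)
  have e : n - 1 + 1 = n := Nat.succ_pred_eq_of_pos hn
  rw [e] at h
  have e2 : ((n - 1 : ℕ) : ℝ) + 1 = (n : ℝ) := by
    rw [Nat.cast_sub hn]; push_cast; ring
  rw [e2] at h
  exact h

include hT hγ in
lemma hsq_anti (t : ℕ) : hsq μ T γ (t + 1) ≤ hsq μ T γ t := by
  refine ciInf_mono (hsq_bdd μ T γ _) fun n => ?_
  have h := HH_mono μ T γ hT hγ (SgeS_anti (Nat.le_succ t) (n+1))
  have hpos : (0:ℝ) < (n:ℝ) + 1 := by positivity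
  exact (div_le_div_iff_of_pos_right hpos).2 h

lemma hsq_eq_zero {t : ℕ} (ht : k ≤ t) : hsq μ T γ t = 0 := by
  have : ∀ n : ℕ, HH μ T γ (SgeS t (n+1)) = 0 := fun n => by
    rw [SgeS_of_ge ht, HH_empty]
  simp only [hsq]
  rw [show (fun n : ℕ => HH μ T γ (SgeS t (n+1)) / (n+1))
      = fun n : ℕ => 0 from funext fun n => by rw [this n, zero_div]]
  exact ciInf_const

include hT hγ hμT in
lemma HH_Sge_add (t n₁ n₂ : ℕ) :
    HH μ T γ (SgeS t (n₁ + n₂)) ≤ HH μ T γ (SgeS t n₁) + HH μ T γ (SgeS t n₂) := by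
  rw [SgeS_add]
  refine le_trans (HH_union_le μ T γ hT hγ _ _) ?_
  rw [HH_shift μ T γ hT hγ hμT]

include hT hγ hμT in
lemma HH_Sge_mul (t s n₀ : ℕ) :
    HH μ T γ (SgeS t (s * n₀)) ≤ s * HH μ T γ (SgeS t n₀) := by
  induction s with
  | zero => simp [SgeS_zero, HH_empty μ T γ]
  | succ s ih =>
    have h1 : (s + 1) * n₀ = s * n₀ + n₀ := by ring
    rw [h1]
    refine le_trans (HH_Sge_add μ T γ hT hγ hμT t _ _) ?_
    push_cast
    linarith

include hT hγ in
lemma HH_cond_le (S S' : Finset (Fin k × ℕ)) :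
    HH μ T γ (S ∪ S') - HH μ T γ S' ≤ HH μ T γ S := by
  have := HH_union_le μ T γ hT hγ S S'
  linarith

include hT hγ in
lemma HH_cond_nonneg (S S' : Finset (Fin k × ℕ)) :
    0 ≤ HH μ T γ (S ∪ S') - HH μ T γ S' :=
  sub_nonneg.2 (HH_mono μ T γ hT hγ Finset.subset_union_right)

include hT hγ in
lemma cond_blocks (j : Fin k) (m₀ : ℕ) (C : Finset (Fin k × ℕ)) (q : ℕ) :
    HH μ T γ (blkS j (q * m₀) ∪ C) - HH μ T γ C
      ≤ ∑ i ∈ Finset.range q,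
          (HH μ T γ ((blkS j m₀).image (shf (i * m₀)) ∪ C) - HH μ T γ C) := by
  induction q with
  | zero => simp [blkS_zero, HH_empty μ T γ]
  | succ q ih =>
    have hsplit : blkS j ((q+1) * m₀)
        = blkS j (q * m₀) ∪ (blkS j m₀).image (shf (q * m₀)) := by
      rw [Nat.succ_mul]
      exact blkS_add j (q * m₀) m₀
    have hre : blkS j ((q+1) * m₀) ∪ C
        = (blkS j m₀).image (shf (q * m₀)) ∪ (blkS j (q * m₀) ∪ C) := by
      rw [hsplit]
      ext p
      simp only [Finset.mem_union]
      tauto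
    have h1 := HH_cond_mono μ T γ hT hγ ((blkS j m₀).image (shf (q * m₀)))
      (show C ⊆ blkS j (q * m₀) ∪ C from Finset.subset_union_right)
    rw [Finset.sum_range_succ]
    rw [hre]
    linarith

set_option maxHeartbeats 1000000 in
include hT hγ hμT in
lemma hsq_step (j : Fin k) (m₀ M : ℕ) (hm₀ : 0 < m₀) :
    hsq μ T γ (j : ℕ) ≤ hsq μ T γ ((j : ℕ) + 1) +
      (HH μ T γ (blkS j m₀ ∪ SgeS ((j:ℕ)+1) M)
        - HH μ T γ (SgeS ((j:ℕ)+1) M)) / m₀ := by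
  classical
  set t := (j : ℕ) with htdef
  set c₀ := HH μ T γ (blkS j m₀ ∪ SgeS (t+1) M) - HH μ T γ (SgeS (t+1) M) with hc₀
  set K := HH μ T γ (blkS j m₀) with hKdef
  have hc₀0 : 0 ≤ c₀ := HH_cond_nonneg μ T γ hT hγ _ _
  have hK0 : 0 ≤ K := HH_nonneg μ T γ _
  have main : ∀ q : ℕ, HH μ T γ (SgeS t (q * m₀))
      ≤ HH μ T γ (SgeS (t+1) (q * m₀)) + q * c₀ + M * K := by
    intro q
    set n := q * m₀ with hndef
    have hsplit : SgeS t n = blkS j n ∪ SgeS (t+1) n := by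
      have hj : (⟨t, j.isLt⟩ : Fin k) = j := by
        apply Fin.ext; rfl
      rw [SgeS_split j.isLt n, hj]
    have h1 : HH μ T γ (SgeS t n) - HH μ T γ (SgeS (t+1) n)
        ≤ ∑ i ∈ Finset.range q,
            (HH μ T γ ((blkS j m₀).image (shf (i * m₀)) ∪ SgeS (t+1) n)
              - HH μ T γ (SgeS (t+1) n)) := by
      rw [hsplit]
      exact cond_blocks μ T γ hT hγ j m₀ _ q
    have h2 : ∀ i ∈ Finset.range q,
        HH μ T γ ((blkS j m₀).image (shf (i * m₀)) ∪ SgeS (t+1) n)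
          - HH μ T γ (SgeS (t+1) n)
        ≤ c₀ + (if i * m₀ + M ≤ n then 0 else K) := by
      intro i _
      by_cases hgood : i * m₀ + M ≤ n
      · rw [if_pos hgood, add_zero]
        have hsub : (SgeS (t+1) M).image (shf (i * m₀)) ⊆ SgeS (t+1) n :=
          shf_image_SgeS_subset (k := k) hgood
        have h := HH_cond_mono μ T γ hT hγ ((blkS j m₀).image (shf (i * m₀))) hsub
        rw [← Finset.image_union] at h
        rw [HH_shift μ T γ hT hγ hμT, HH_shift μ T γ hT hγ hμT] at h
        linarith
      · rw [if_neg hgood]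
        have h := HH_cond_le μ T γ hT hγ ((blkS j m₀).image (shf (i * m₀)))
          (SgeS (t+1) n)
        rw [HH_shift μ T γ hT hγ hμT] at h
        linarith
    have hcard : ((Finset.range q).filter fun i => ¬(i * m₀ + M ≤ n)).card ≤ M := by
      have hsubset : ((Finset.range q).filter fun i => ¬(i * m₀ + M ≤ n))
          ⊆ Finset.Ico (q - M) q := by
        intro i hi
        rw [Finset.mem_filter, Finset.mem_range] at hi
        obtain ⟨hilt, hbad⟩ := hi
        rw [Finset.mem_Ico]
        have e1 : i * m₀ + (q - i) * m₀ = q * m₀ := by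
          rw [← Nat.add_mul, Nat.add_sub_cancel' (le_of_lt hilt)]
        have e2 : q - i ≤ (q - i) * m₀ := Nat.le_mul_of_pos_right _ hm₀
        omega
      calc ((Finset.range q).filter fun i => ¬(i * m₀ + M ≤ n)).card
          ≤ (Finset.Ico (q - M) q).card := Finset.card_le_card hsubset
        _ = q - (q - M) := Nat.card_Ico _ _
        _ ≤ M := by omega
    have h3 : ∑ i ∈ Finset.range q, (c₀ + (if i * m₀ + M ≤ n then 0 else K))
        ≤ q * c₀ + M * K := by
      rw [Finset.sum_add_distrib, Finset.sum_const, nsmul_eq_mul, Finset.card_range]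
      have h4 : ∑ i ∈ Finset.range q, (if i * m₀ + M ≤ n then (0:ℝ) else K)
          ≤ M * K := by
        rw [Finset.sum_ite, Finset.sum_const_zero, zero_add, Finset.sum_const,
          nsmul_eq_mul]
        have := hcard
        calc (((Finset.range q).filter fun i => ¬(i * m₀ + M ≤ n)).card : ℝ) * K
            ≤ (M : ℝ) * K := by
              refine mul_le_mul_of_nonneg_right ?_ hK0
              exact_mod_cast hcard
          _ = M * K := rfl
      linarith
    have h5 := Finset.sum_le_sum h2
    linarith
  -- epsilon argument
  refine le_of_forall_pos_le_add fun ε hε => ?_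
  have hinf : hsq μ T γ (t+1) < hsq μ T γ (t+1) + ε/2 := by linarith
  obtain ⟨n₀, hn₀⟩ := exists_lt_of_ciInf_lt
    (show (⨅ n : ℕ, HH μ T γ (SgeS (t+1) (n+1)) / (n+1))
      < hsq μ T γ (t+1) + ε/2 from hinf)
  set n₁ := n₀ + 1 with hn₁def
  set Hn₁ := HH μ T γ (SgeS (t+1) n₁) with hHn₁
  have hn₁pos : (0:ℝ) < (n₁ : ℝ) := by exact_mod_cast Nat.succ_pos n₀
  have hHn₁0 : 0 ≤ Hn₁ := HH_nonneg μ T γ _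
  obtain ⟨s₀, hs₀⟩ := exists_nat_ge ((M * K) / (ε/2 * (n₁ * m₀)))
  set s := s₀ + 1 with hsdef
  set q := n₁ * s with hqdef
  set n := q * m₀ with hndef
  have hqpos : 0 < q := hqdef ▸ Nat.mul_pos (Nat.succ_pos n₀) (Nat.succ_pos s₀)
  have hnpos : 0 < n := hndef ▸ Nat.mul_pos hqpos hm₀
  have hnR : (0:ℝ) < (n : ℝ) := by exact_mod_cast hnpos
  have h4 := main q
  have h5 : HH μ T γ (SgeS (t+1) n) ≤ (s * m₀ : ℕ) * Hn₁ := by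
    have he : n = (s * m₀) * n₁ := by rw [hndef, hqdef]; ring
    rw [he]
    exact HH_Sge_mul μ T γ hT hγ hμT (t+1) (s * m₀) n₁
  have h6 : hsq μ T γ t ≤ HH μ T γ (SgeS t n) / n := hsq_le μ T γ t hnpos
  have h7 : HH μ T γ (SgeS t n) ≤ (s * m₀ : ℕ) * Hn₁ + q * c₀ + M * K := by
    linarith
  have h8 : HH μ T γ (SgeS t n) / n
      ≤ ((s * m₀ : ℕ) * Hn₁) / n + (q * c₀) / n + (M * K) / n := by
    rw [← add_div, ← add_div]
    exact (div_le_div_iff_of_pos_right hnR).2 h7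
  have e1 : ((s * m₀ : ℕ) : ℝ) * Hn₁ / n = Hn₁ / n₁ := by
    have he : (n : ℝ) = (n₁ : ℝ) * s * m₀ := by
      rw [hndef, hqdef]; push_cast; ring
    rw [he]
    have hs0 : (s:ℝ) ≠ 0 := by positivity
    have hm0 : (m₀:ℝ) ≠ 0 := by
      exact_mod_cast Nat.pos_iff_ne_zero.1 hm₀
    have hn10 : (n₁:ℝ) ≠ 0 := ne_of_gt hn₁pos
    push_cast
    field_simp
  have e2 : ((q : ℕ) : ℝ) * c₀ / n = c₀ / m₀ := by
    have he : (n : ℝ) = (q : ℝ) * m₀ := by rw [hndef]; push_cast; ring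
    rw [he]
    have hq0 : (q:ℝ) ≠ 0 := by positivity
    have hm0 : (m₀:ℝ) ≠ 0 := by exact_mod_cast Nat.pos_iff_ne_zero.1 hm₀
    field_simp
  have e3 : (M : ℝ) * K / n ≤ ε / 2 := by
    rw [div_le_iff₀ hnR]
    have hd : (0:ℝ) < ε/2 * (n₁ * m₀) := by
      have : (0:ℝ) < (m₀:ℝ) := by exact_mod_cast hm₀
      positivity
    have hMK : (M:ℝ) * K ≤ s₀ * (ε/2 * (n₁ * m₀)) := by
      rw [div_le_iff₀ hd] at hs₀
      linarith
    have hs₀s : (s₀ : ℝ) ≤ s := by exact_mod_cast Nat.le_succ s₀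
    have hnlow : (s₀ : ℝ) * (ε/2 * (n₁ * m₀)) ≤ ε/2 * n := by
      have he : (n:ℝ) = (n₁ : ℝ) * s * m₀ := by rw [hndef, hqdef]; push_cast; ring
      rw [he]
      have : (s₀:ℝ) * (ε/2 * ((n₁:ℝ) * m₀)) = ε/2 * ((n₁:ℝ) * s₀ * m₀) := by ring
      rw [this]
      have hmono : (n₁:ℝ) * s₀ * m₀ ≤ (n₁:ℝ) * s * m₀ := by
        have hm0 : (0:ℝ) ≤ (m₀:ℝ) := by positivity
        have hn10 : (0:ℝ) ≤ (n₁:ℝ) := by positivity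
        nlinarith
      nlinarith
    calc (M:ℝ) * K ≤ s₀ * (ε/2 * (n₁ * m₀)) := hMK
      _ ≤ ε/2 * n := hnlow
      _ = ε/2 * n := rfl
  have hfin : hsq μ T γ t ≤ Hn₁ / n₁ + c₀ / m₀ + ε/2 := by
    calc hsq μ T γ t ≤ HH μ T γ (SgeS t n) / n := h6
      _ ≤ ((s * m₀ : ℕ) : ℝ) * Hn₁ / n + ((q:ℕ):ℝ) * c₀ / n + (M:ℝ) * K / n := by
          push_cast at h8 ⊢
          linarith
      _ ≤ Hn₁ / n₁ + c₀ / m₀ + ε/2 := by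
          rw [e1, e2]
          linarith
  have hlast : Hn₁ / n₁ < hsq μ T γ (t+1) + ε/2 := by
    have : ((n₀:ℝ) + 1) = (n₁ : ℝ) := by rw [hn₁def]; push_cast; ring
    calc Hn₁ / n₁ = HH μ T γ (SgeS (t+1) (n₀+1)) / ((n₀:ℝ)+1) := by
          rw [hHn₁, hn₁def, this]
      _ < hsq μ T γ (t+1) + ε/2 := hn₀
  linarith

end Dyn

section Abel

lemma abel_sum (k : ℕ) (cwN aN hsN : ℕ → ℝ)
    (hcw : ∀ t, t < k → cwN t = ∑ j ∈ Finset.range (t+1), aN j)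
    (hk : hsN k = 0) :
    ∑ t ∈ Finset.range k, cwN t * (hsN t - hsN (t+1))
      = ∑ t ∈ Finset.range k, aN t * hsN t := by
  classical
  have h1 : ∀ t ∈ Finset.range k,
      cwN t * (hsN t - hsN (t+1))
        = ∑ j ∈ Finset.range k, (if j ≤ t then aN j * (hsN t - hsN (t+1)) else 0) := by
    intro t ht
    rw [Finset.mem_range] at ht
    rw [hcw t ht, Finset.sum_mul]
    have h2 : ∑ j ∈ Finset.range k, (if j ≤ t then aN j * (hsN t - hsN (t+1)) else 0)
        = ∑ j ∈ Finset.range (t+1), aN j * (hsN t - hsN (t+1)) := by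
      rw [← Finset.sum_filter]
      congr 1
      ext s
      simp only [Finset.mem_filter, Finset.mem_range]
      omega
    rw [h2]
  rw [Finset.sum_congr rfl h1, Finset.sum_comm]
  refine Finset.sum_congr rfl fun j hj => ?_
  rw [Finset.mem_range] at hj
  have h2 : ∑ t ∈ Finset.range k, (if j ≤ t then aN j * (hsN t - hsN (t+1)) else 0)
      = aN j * ∑ t ∈ Finset.range k, (if j ≤ t then (hsN t - hsN (t+1)) else 0) := by
    rw [Finset.mul_sum]
    refine Finset.sum_congr rfl fun t _ => ?_
    by_cases h : j ≤ t
    · rw [if_pos h, if_pos h]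
    · rw [if_neg h, if_neg h, mul_zero]
  rw [h2]
  have h3 : ∑ t ∈ Finset.range k, (if j ≤ t then (hsN t - hsN (t+1)) else 0)
      = ∑ t ∈ Finset.Ico j k, (hsN t - hsN (t+1)) := by
    rw [← Finset.sum_filter]
    congr 1
    ext t
    simp only [Finset.mem_filter, Finset.mem_range, Finset.mem_Ico]
    omega
  rw [h3]
  have h4 : ∑ t ∈ Finset.Ico j k, (hsN t - hsN (t+1)) = hsN j - hsN k := by
    rw [Finset.sum_Ico_eq_sum_range]
    have h5 : ∀ i ∈ Finset.range (k - j),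
        hsN (j + i) - hsN (j + i + 1)
          = (fun i => hsN (j + i)) i - (fun i => hsN (j + i)) (i + 1) := by
      intro i _
      rw [show j + i + 1 = j + (i + 1) from by omega]
    rw [Finset.sum_congr rfl h5, Finset.sum_range_sub' (fun i => hsN (j + i)) (k - j)]
    rw [Nat.add_zero, show j + (k - j) = k from by omega]
  rw [h4, hk, sub_zero]

end Abel

section CwLemmas
variable {k : ℕ}

lemma cw_mono (a : Fin k → ℝ) (ha : ∀ i, 0 ≤ a i) {i j : Fin k} (hij : i ≤ j) :
    cw a i ≤ cw a j :=
  Finset.sum_le_sum_of_subset_of_nonneg (Finset.Iic_subset_Iic.2 hij) (fun t _ _ => ha t)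

lemma cw_pos [NeZero k] (a : Fin k → ℝ) (ha1 : 0 < a 0) (ha : ∀ i, 0 ≤ a i) (i : Fin k) :
    0 < cw a i :=
  lt_of_lt_of_le ha1 (Finset.single_le_sum (fun t _ => ha t) (Finset.mem_Iic.2 (by rw [Fin.le_def]; simp)))

lemma cw_eq_range (a : Fin k → ℝ) {t : ℕ} (ht : t < k) :
    cw a ⟨t, ht⟩ = ∑ s ∈ Finset.range (t+1), (if h : s < k then a ⟨s, h⟩ else 0) := by
  classical
  have h1 : cw a ⟨t, ht⟩ = ∑ j : Fin k, (if (j : ℕ) ≤ t then a j else 0) := by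
    rw [cw, show Finset.Iic (⟨t, ht⟩ : Fin k)
        = Finset.univ.filter (fun j : Fin k => (j : ℕ) ≤ t) from by
      ext j; simp [Fin.le_def]]
    rw [Finset.sum_filter]
  have h2 : ∑ s ∈ Finset.range k,
        (if s ≤ t then (if h : s < k then a ⟨s, h⟩ else 0) else 0)
      = ∑ s ∈ Finset.range (t+1), (if h : s < k then a ⟨s, h⟩ else 0) := by
    rw [← Finset.sum_filter]
    congr 1
    ext s
    simp only [Finset.mem_filter, Finset.mem_range]
    omega
  rw [h1, ← h2,
    ← Fin.sum_univ_eq_sum_range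
      (fun s => if s ≤ t then (if h : s < k then a ⟨s, h⟩ else 0) else 0) k]
  refine Finset.sum_congr rfl fun j _ => ?_
  by_cases hj : (j : ℕ) ≤ t
  · rw [if_pos hj, if_pos hj, dif_pos j.isLt, Fin.eta]
  · rw [if_neg hj, if_neg hj]

end CwLemmas

section FinalBound
variable {Y : Type*} [MeasurableSpace Y] (μ : Measure Y) [IsProbabilityMeasure μ]
  (T : Y → Y) {k : ℕ} {m : Fin k → ℕ} (γ : ∀ i, Fin (m i) → Set Y)
  (hT : Measurable T) (hγ : ∀ i, IsPart (γ i))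
  (hμT : ∀ s : Set Y, MeasurableSet s → μ (T ⁻¹' s) = μ s)

set_option maxHeartbeats 1000000 in
include hT hγ hμT in
lemma final_bound [NeZero k] (a : Fin k → ℝ) (ha1 : 0 < a 0) (ha : ∀ i, 0 ≤ a i)
    (N : ℕ) (hN : 1 ≤ N) :
    (∑ i : Fin k, a i * hsq μ T γ (i : ℕ)) * N
      ≤ HH μ T γ (Finset.univ.biUnion fun j : Fin k =>
          blkS j ⌈cw a j * (N : ℝ)⌉₊) := by
  classical
  set mb : Fin k → ℕ := fun j => ⌈cw a j * (N : ℝ)⌉₊ with hmb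
  set SB : ℕ → Finset (Fin k × ℕ) := fun t =>
    Finset.univ.biUnion fun j : Fin k =>
      if t ≤ (j : ℕ) then blkS j (mb j) else ∅ with hSB
  have hmemSB : ∀ (t : ℕ) (p : Fin k × ℕ),
      p ∈ SB t ↔ t ≤ (p.1 : ℕ) ∧ p.2 < mb p.1 := by
    intro t p
    rw [hSB]
    simp only [Finset.mem_biUnion, Finset.mem_univ, true_and]
    constructor
    · rintro ⟨j, hj⟩
      by_cases h : t ≤ (j : ℕ)
      · rw [if_pos h] at hj
        obtain ⟨h1, h2⟩ := mem_blkS.1 hj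
        exact ⟨h1 ▸ h, h1 ▸ h2⟩
      · rw [if_neg h] at hj
        exact absurd hj (Finset.notMem_empty p)
    · rintro ⟨h1, h2⟩
      exact ⟨p.1, by rw [if_pos h1]; exact mem_blkS.2 ⟨rfl, h2⟩⟩
  have hSB0 : SB 0 = Finset.univ.biUnion fun j : Fin k => blkS j (mb j) := by
    rw [hSB]
    refine Finset.biUnion_congr rfl fun j _ => ?_
    rw [if_pos (Nat.zero_le _)]
  have hSBk : SB k = ∅ := by
    ext p
    rw [hmemSB]
    simp only [Finset.notMem_empty, iff_false, not_and]
    intro h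
    exact absurd h (not_le.2 p.1.isLt)
  have hkpos : 0 < k := Nat.pos_of_ne_zero (NeZero.ne k)
  have hmble : ∀ j : Fin k, mb j ≤ mb ⟨k - 1, by omega⟩ := by
    intro j
    refine Nat.ceil_le_ceil ?_
    refine mul_le_mul_of_nonneg_right (cw_mono a ha ?_) (by positivity)
    rw [Fin.le_def]
    have := j.isLt
    simp only []
    omega
  set MN : ℕ := mb ⟨k - 1, by omega⟩ with hMN
  have hsub : ∀ t : ℕ, SB (t+1) ⊆ SgeS (t+1) MN := by
    intro t p hp
    rw [hmemSB] at hp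
    rw [mem_SgeS]
    exact ⟨hp.1, lt_of_lt_of_le hp.2 (hmble p.1)⟩
  have hNpos : (0:ℝ) < (N : ℝ) := by exact_mod_cast hN
  have hmbpos : ∀ j : Fin k, 0 < mb j := by
    intro j
    refine Nat.ceil_pos.2 ?_
    have h := cw_pos a ha1 ha j
    positivity
  have hmbge : ∀ j : Fin k, cw a j * (N : ℝ) ≤ (mb j : ℝ) := fun j => Nat.le_ceil _
  have hsplit : ∀ t (ht : t < k),
      SB t = blkS (⟨t, ht⟩ : Fin k) (mb ⟨t, ht⟩) ∪ SB (t+1) := by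
    intro t ht
    ext p
    rw [hmemSB, Finset.mem_union, mem_blkS, hmemSB]
    constructor
    · rintro ⟨h1, h2⟩
      rcases eq_or_lt_of_le h1 with h | h
      · left
        have hpe : p.1 = ⟨t, ht⟩ := Fin.ext h.symm
        exact ⟨hpe, by rw [← hpe]; exact h2⟩
      · exact Or.inr ⟨h, h2⟩
    · rintro (⟨hpe, h2⟩ | ⟨h1, h2⟩)
      · constructor
        · rw [hpe]
        · rw [hpe]; exact h2
      · exact ⟨by omega, h2⟩
  have hstep : ∀ t (ht : t < k),
      cw a ⟨t, ht⟩ * (N : ℝ) * (hsq μ T γ t - hsq μ T γ (t+1))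
        ≤ HH μ T γ (SB t) - HH μ T γ (SB (t+1)) := by
    intro t ht
    have h1 := hsq_step μ T γ hT hγ hμT (⟨t, ht⟩ : Fin k) (mb ⟨t, ht⟩) MN
      (hmbpos ⟨t, ht⟩)
    have htj : ((⟨t, ht⟩ : Fin k) : ℕ) = t := rfl
    rw [htj] at h1
    have hd0 : 0 ≤ hsq μ T γ t - hsq μ T γ (t+1) :=
      sub_nonneg.2 (hsq_anti μ T γ hT hγ t)
    have hmpos : (0:ℝ) < (mb ⟨t, ht⟩ : ℝ) := by exact_mod_cast hmbpos ⟨t, ht⟩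
    have h2 : (hsq μ T γ t - hsq μ T γ (t+1)) * (mb ⟨t, ht⟩ : ℝ)
        ≤ HH μ T γ (blkS ⟨t, ht⟩ (mb ⟨t, ht⟩) ∪ SgeS (t+1) MN)
          - HH μ T γ (SgeS (t+1) MN) := by
      rw [← le_div_iff₀ hmpos]
      linarith
    have h3 : HH μ T γ (blkS ⟨t, ht⟩ (mb ⟨t, ht⟩) ∪ SgeS (t+1) MN)
          - HH μ T γ (SgeS (t+1) MN)
        ≤ HH μ T γ (SB t) - HH μ T γ (SB (t+1)) := by
      have h4 := HH_cond_mono μ T γ hT hγ (blkS ⟨t, ht⟩ (mb ⟨t, ht⟩)) (hsub t)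
      rw [← hsplit t ht] at h4
      linarith
    calc cw a ⟨t, ht⟩ * (N : ℝ) * (hsq μ T γ t - hsq μ T γ (t+1))
        ≤ (mb ⟨t, ht⟩ : ℝ) * (hsq μ T γ t - hsq μ T γ (t+1)) :=
          mul_le_mul_of_nonneg_right (hmbge _) hd0
      _ = (hsq μ T γ t - hsq μ T γ (t+1)) * (mb ⟨t, ht⟩ : ℝ) := mul_comm _ _
      _ ≤ _ := le_trans h2 h3
  have htel : ∑ t ∈ Finset.range k, (HH μ T γ (SB t) - HH μ T γ (SB (t+1)))
      = HH μ T γ (SB 0) - HH μ T γ (SB k) :=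
    Finset.sum_range_sub' (fun t => HH μ T γ (SB t)) k
  have hsum1 : ∑ t ∈ Finset.range k,
      (if h : t < k then cw a ⟨t, h⟩ else 0) * (N : ℝ)
        * (hsq μ T γ t - hsq μ T γ (t+1))
      ≤ HH μ T γ (SB 0) := by
    calc ∑ t ∈ Finset.range k,
        (if h : t < k then cw a ⟨t, h⟩ else 0) * (N : ℝ)
          * (hsq μ T γ t - hsq μ T γ (t+1))
        ≤ ∑ t ∈ Finset.range k, (HH μ T γ (SB t) - HH μ T γ (SB (t+1))) := by
          refine Finset.sum_le_sum fun t htm => ?_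
          rw [Finset.mem_range] at htm
          rw [dif_pos htm]
          exact hstep t htm
      _ = HH μ T γ (SB 0) - HH μ T γ (SB k) := htel
      _ = HH μ T γ (SB 0) := by rw [hSBk, HH_empty μ T γ, sub_zero]
  have habel : ∑ t ∈ Finset.range k,
        (if h : t < k then cw a ⟨t, h⟩ else 0) * (hsq μ T γ t - hsq μ T γ (t+1))
      = ∑ t ∈ Finset.range k, (if h : t < k then a ⟨t, h⟩ else 0) * hsq μ T γ t := by
    refine abel_sum k _ _ _ ?_ ?_
    · intro t ht
      rw [dif_pos ht]
      exact cw_eq_range a ht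
    · exact hsq_eq_zero μ T γ (le_refl k)
  have hfs : ∑ t ∈ Finset.range k,
        (if h : t < k then cw a ⟨t, h⟩ else 0) * (N : ℝ)
          * (hsq μ T γ t - hsq μ T γ (t+1))
      = (∑ t ∈ Finset.range k, (if h : t < k then a ⟨t, h⟩ else 0) * hsq μ T γ t)
          * (N : ℝ) := by
    rw [← habel, Finset.sum_mul]
    refine Finset.sum_congr rfl fun t _ => by ring
  have hlhs : ∑ i : Fin k, a i * hsq μ T γ (i : ℕ)
      = ∑ t ∈ Finset.range k, (if h : t < k then a ⟨t, h⟩ else 0) * hsq μ T γ t := by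
    rw [← Fin.sum_univ_eq_sum_range
      (fun t => (if h : t < k then a ⟨t, h⟩ else 0) * hsq μ T γ t) k]
    refine Finset.sum_congr rfl fun i _ => ?_
    rw [dif_pos i.isLt, Fin.eta]
  rw [hlhs, ← hSB0, ← hfs]
  exact hsum1

end FinalBound

lemma EReal_coe_sum {ι : Type*} (s : Finset ι) (f : ι → ℝ) :
    ((∑ i ∈ s, f i : ℝ) : EReal) = ∑ i ∈ s, ((f i : ℝ) : EReal) := by
  classical
  induction s using Finset.cons_induction with
  | empty => simp
  | cons a s ha ih => rw [Finset.sum_cons, Finset.sum_cons, EReal.coe_add, ih]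


/-- For `μ ∈ M(X₁,T₁)` and finite Borel partitions `α_i` of `X_i`,
`∑_i a_i h_μ(T₁, ⋁_{j=i}^k τ_{j-1}^{-1}α_j)
  ≤ liminf_N (1/N) H_μ(⋁_{i=1}^k (τ_{i-1}^{-1}α_i)_0^{⌈(a_1+…+a_i)N⌉-1})`. -/
theorem weighted_partition_entropy_le_liminf
    {k : ℕ} [NeZero k]
    (X : Fin k → Type) [∀ i, MetricSpace (X i)] [∀ i, CompactSpace (X i)]
    [∀ i, MeasurableSpace (X i)] [∀ i, BorelSpace (X i)]
    (T : ∀ i, X i → X i) (hT : ∀ i, Continuous (T i))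
    (τ : ∀ i, X 0 → X i) (hτ0 : τ 0 = id)
    (hτc : ∀ i, Continuous (τ i)) (hτs : ∀ i, Function.Surjective (τ i))
    (hτe : ∀ i, τ i ∘ T 0 = T i ∘ τ i)
    (hchain : ∀ i j : Fin k, i ≤ j → ∃ p : X i → X j,
        Continuous p ∧ p ∘ T i = T j ∘ p ∧ p ∘ τ i = τ j)
    (a : Fin k → ℝ) (ha1 : 0 < a 0) (ha : ∀ i, 0 ≤ a i)
    (μ : Measure (X 0)) [IsProbabilityMeasure μ] (hμ : μ.map (T 0) = μ)
    (m : Fin k → ℕ) (α : ∀ i, Fin (m i) → Set (X i)) (hα : ∀ i, IsPart (α i)) :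
    (∑ i : Fin k, ((a i : ℝ) : EReal) *
        hPart μ (T 0) (partJoinFrom (fun j t => τ j ⁻¹' α j t) i))
      ≤ Filter.liminf
          (fun N : ℕ =>
            ((entH μ (bigPartJoin (T 0) a (fun j t => τ j ⁻¹' α j t) N) / N : ℝ) : EReal))
          Filter.atTop := by
  classical
  have hTm : Measurable (T 0) := (hT 0).measurable
  have hμT : ∀ s : Set (X 0), MeasurableSet s → μ ((T 0) ⁻¹' s) = μ s := by
    intro s hs
    conv_rhs => rw [← hμ]
    rw [Measure.map_apply hTm hs]
  set γf : ∀ i : Fin k, Fin (m i) → Set (X 0) := fun j t => τ j ⁻¹' α j t with hγfdef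
  have hγP : ∀ i, IsPart (γf i) := by
    intro i
    rw [hγfdef]
    exact isPart_preimage (hα i) (hτc i).measurable
  have hBi : ∀ i : Fin k, IsPart (partJoinFrom γf i) := fun i =>
    isPart_pi (δ := fun (j : {j : Fin k // i ≤ j}) t => γf j.1 t) (fun j => hγP j.1)
  have hdynP : ∀ (i : Fin k) (n : ℕ),
      IsPart (dynJoin (T 0) (partJoinFrom γf i) n) := fun i n =>
    isPart_pi (δ := fun (l : Fin n) v => (T 0)^[(l : ℕ)] ⁻¹' partJoinFrom γf i v)
      (fun l => isPart_preimage (hBi i) (hTm.iterate l))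
  have hER : ∀ (i : Fin k) (n : ℕ),
      entH μ (dynJoin (T 0) (partJoinFrom γf i) n)
        = HH μ (T 0) γf (SgeS (i : ℕ) n) := by
    intro i n
    refine le_antisymm ?_ ?_
    · refine entH_le_of_ref μ (isPart_cp (T 0) γf hTm hγP _) (hdynP i n)
        (fun c (l : Fin n) (j : {j : Fin k // i ≤ j}) =>
          c ⟨(j.1, (l : ℕ)), mem_SgeS.2 ⟨Fin.le_def.1 j.2, l.2⟩⟩) ?_
      intro c x hx
      refine Set.mem_iInter.2 fun l =>
        Set.mem_preimage.2 (Set.mem_iInter.2 fun j => ?_)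
      exact Set.mem_preimage.1
        (Set.mem_iInter.1 hx ⟨(j.1, (l : ℕ)), mem_SgeS.2 ⟨Fin.le_def.1 j.2, l.2⟩⟩)
    · refine entH_le_of_ref μ (hdynP i n) (isPart_cp (T 0) γf hTm hγP _)
        (fun c (p : {p // p ∈ SgeS (i : ℕ) n}) =>
          c ⟨p.1.2, (mem_SgeS.1 p.2).2⟩ ⟨p.1.1, Fin.le_def.2 (mem_SgeS.1 p.2).1⟩) ?_
      intro c x hx
      refine Set.mem_iInter.2 fun p => Set.mem_preimage.2 ?_
      have h1 := Set.mem_iInter.1 hx (⟨p.1.2, (mem_SgeS.1 p.2).2⟩ : Fin n)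
      exact Set.mem_iInter.1 (Set.mem_preimage.1 h1)
        (⟨p.1.1, Fin.le_def.2 (mem_SgeS.1 p.2).1⟩ : {j : Fin k // i ≤ j})
  -- `hPart ≤ hsq`
  have hle : ∀ i : Fin k,
      hPart μ (T 0) (partJoinFrom γf i)
        ≤ ((hsq μ (T 0) γf (i : ℕ) : ℝ) : EReal) := by
    intro i
    have hfun : (fun n : ℕ =>
        ((entH μ (dynJoin (T 0) (partJoinFrom γf i) n) / n : ℝ) : EReal))
        = fun n : ℕ => ((HH μ (T 0) γf (SgeS (i : ℕ) n) / n : ℝ) : EReal) :=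
      funext fun n => by rw [hER i n]
    rw [hPart, hfun]
    refine le_of_forall_gt_imp_ge_of_dense fun b hb => ?_
    induction b with
    | bot => exact absurd hb (by simp)
    | top => exact le_top
    | coe r =>
      have hr : hsq μ (T 0) γf (i : ℕ) < r := EReal.coe_lt_coe_iff.1 hb
      obtain ⟨n₀, hn₀⟩ := exists_lt_of_ciInf_lt
        (show (⨅ n : ℕ, HH μ (T 0) γf (SgeS (i : ℕ) (n+1)) / (n+1)) < r from hr)
      refine Filter.liminf_le_of_frequently_le' ?_
      rw [Filter.frequently_atTop]
      intro N
      refine ⟨(N+1) * (n₀+1), ?_, ?_⟩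
      · calc N ≤ N + 1 := Nat.le_succ N
          _ ≤ (N+1) * (n₀+1) := Nat.le_mul_of_pos_right _ (Nat.succ_pos n₀)
      · rw [EReal.coe_le_coe_iff]
        have hmul := HH_Sge_mul μ (T 0) γf hTm hγP hμT (i : ℕ) (N+1) (n₀+1)
        have hp1 : (0:ℝ) < ((N+1 : ℕ) : ℝ) := by positivity
        have hp2 : (0:ℝ) < ((n₀+1 : ℕ) : ℝ) := by positivity
        have hp3 : (0:ℝ) < (((N+1) * (n₀+1) : ℕ) : ℝ) := by positivity
        have e : (((N+1) * (n₀+1) : ℕ) : ℝ) = ((N+1 : ℕ) : ℝ) * ((n₀+1 : ℕ) : ℝ) := by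
          push_cast; ring
        have step1 : HH μ (T 0) γf (SgeS (i : ℕ) ((N+1) * (n₀+1)))
              / (((N+1) * (n₀+1) : ℕ) : ℝ)
            ≤ HH μ (T 0) γf (SgeS (i : ℕ) (n₀+1)) / ((n₀+1 : ℕ) : ℝ) := by
          rw [div_le_div_iff₀ hp3 hp2]
          calc HH μ (T 0) γf (SgeS (i : ℕ) ((N+1) * (n₀+1))) * ((n₀+1 : ℕ) : ℝ)
              ≤ ((N+1 : ℕ) : ℝ) * HH μ (T 0) γf (SgeS (i : ℕ) (n₀+1))
                  * ((n₀+1 : ℕ) : ℝ) := by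
                refine mul_le_mul_of_nonneg_right ?_ hp2.le
                exact_mod_cast hmul
            _ = HH μ (T 0) γf (SgeS (i : ℕ) (n₀+1)) * (((N+1) * (n₀+1) : ℕ) : ℝ) := by
                rw [e]; ring
        have step2 : HH μ (T 0) γf (SgeS (i : ℕ) (n₀+1)) / ((n₀+1 : ℕ) : ℝ) < r := by
          have ecast : ((n₀+1 : ℕ) : ℝ) = (n₀ : ℝ) + 1 := by push_cast; ring
          rw [ecast]
          exact hn₀
        calc HH μ (T 0) γf (SgeS (i : ℕ) ((N+1) * (n₀+1)))
              / ((((N+1) * (n₀+1) : ℕ)) : ℝ) ≤ _ := step1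
          _ ≤ r := le_of_lt step2
  -- big join identification
  have hbig : ∀ N : ℕ, entH μ (bigPartJoin (T 0) a γf N)
      = HH μ (T 0) γf (Finset.univ.biUnion fun j : Fin k =>
          blkS j ⌈cw a j * (N : ℝ)⌉₊) := by
    intro N
    have hmem : ∀ p : Fin k × ℕ,
        p ∈ (Finset.univ.biUnion fun j : Fin k => blkS j ⌈cw a j * (N : ℝ)⌉₊)
          ↔ p.2 < ⌈cw a p.1 * (N : ℝ)⌉₊ := by
      intro p
      simp only [Finset.mem_biUnion, Finset.mem_univ, true_and]
      constructor
      · rintro ⟨j, hj⟩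
        obtain ⟨h1, h2⟩ := mem_blkS.1 hj
        rw [h1]; exact h2
      · intro h; exact ⟨p.1, mem_blkS.2 ⟨rfl, h⟩⟩
    have hbigP : IsPart (bigPartJoin (T 0) a γf N) :=
      isPart_pi (δ := fun (i : Fin k) (ci : Fin ⌈cw a i * (N : ℝ)⌉₊ → Fin (m i)) =>
          ⋂ l : Fin ⌈cw a i * (N : ℝ)⌉₊, (T 0)^[(l : ℕ)] ⁻¹' γf i (ci l))
        (fun i => isPart_pi
          (δ := fun (l : Fin ⌈cw a i * (N : ℝ)⌉₊) v => (T 0)^[(l : ℕ)] ⁻¹' γf i v)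
          (fun l => isPart_preimage (hγP i) (hTm.iterate l)))
    refine le_antisymm ?_ ?_
    · refine entH_le_of_ref μ (isPart_cp (T 0) γf hTm hγP _) hbigP
        (fun c i l => c ⟨(i, (l : ℕ)), (hmem _).2 l.2⟩) ?_
      intro c x hx
      refine Set.mem_iInter.2 fun i => Set.mem_iInter.2 fun l => ?_
      exact Set.mem_iInter.1 hx ⟨(i, (l : ℕ)), (hmem _).2 l.2⟩
    · refine entH_le_of_ref μ hbigP (isPart_cp (T 0) γf hTm hγP _)
        (fun c p => c p.1.1 ⟨p.1.2, (hmem _).1 p.2⟩) ?_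
      intro c x hx
      refine Set.mem_iInter.2 fun p => ?_
      have h1 := Set.mem_iInter.1 hx p.1.1
      exact Set.mem_iInter.1 h1 ⟨p.1.2, (hmem _).1 p.2⟩
  have hreal : ∀ N : ℕ, 1 ≤ N →
      (∑ i : Fin k, a i * hsq μ (T 0) γf (i : ℕ))
        ≤ entH μ (bigPartJoin (T 0) a γf N) / N := by
    intro N hN
    have h1 := final_bound μ (T 0) γf hTm hγP hμT a ha1 ha N hN
    rw [← hbig N] at h1
    have hNpos : (0:ℝ) < (N : ℝ) := by exact_mod_cast hN
    rw [le_div_iff₀ hNpos]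
    exact h1
  have hstep1 : (∑ i : Fin k, ((a i : ℝ) : EReal) * hPart μ (T 0) (partJoinFrom γf i))
      ≤ (((∑ i : Fin k, a i * hsq μ (T 0) γf (i : ℕ)) : ℝ) : EReal) := by
    rw [EReal_coe_sum]
    refine Finset.sum_le_sum fun i _ => ?_
    calc ((a i : ℝ) : EReal) * hPart μ (T 0) (partJoinFrom γf i)
        ≤ ((a i : ℝ) : EReal) * ((hsq μ (T 0) γf (i : ℕ) : ℝ) : EReal) :=
          mul_le_mul_of_nonneg_left (hle i) (by exact_mod_cast ha i)
      _ = ((a i * hsq μ (T 0) γf (i : ℕ) : ℝ) : EReal) := by rw [← EReal.coe_mul]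
  refine le_trans hstep1 ?_
  refine Filter.le_liminf_of_le (by isBoundedDefault) ?_
  filter_upwards [Filter.eventually_ge_atTop 1] with N hN
  exact EReal.coe_le_coe_iff.2 (hreal N hN)

end WTP
end

section
/- Let Z ⊆ X_1, f ∈ C(X_1,ℝ), ε > 0, and let U_i be open covers of X_i with Lebesgue numbers ε_i, i=1,…,k. Then: (i) if ε < min_i ε_i / 2, then P^a(T_1, Z, {U_i}_{i=1}^k, f) ≤ P^a(T_1, Z, ε, f); (ii) if max_{1≤i≤k} diam U_i < ε, then P^a(T_1, Z, ε, f) ≤ P^a(T_1, Z, {U_i}_{i=1}^k, f). -/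
open MeasureTheory Set Filter Topology
open scoped ENNReal symmDiff

namespace WTP

variable {k : ℕ}

/-- Comparison between the local weighted pressure for covers `𝒰_i`
(with Lebesgue numbers `e_i`) and the weighted pressure at scale `ε`:
(i) if `ε < min_i e_i / 2` then `P^𝐚(T₁,Z,{𝒰_i},f) ≤ P^𝐚(T₁,Z,ε,f)`;
(ii) if `max_i diam 𝒰_i < ε` then `P^𝐚(T₁,Z,ε,f) ≤ P^𝐚(T₁,Z,{𝒰_i},f)`. -/
theorem local_pressure_vs_scale_pressure
    {k : ℕ} [NeZero k]
    (X : Fin k → Type) [∀ i, MetricSpace (X i)] [∀ i, CompactSpace (X i)]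
    [∀ i, MeasurableSpace (X i)] [∀ i, BorelSpace (X i)]
    (T : ∀ i, X i → X i) (hT : ∀ i, Continuous (T i))
    (τ : ∀ i, X 0 → X i) (hτ0 : τ 0 = id)
    (hτc : ∀ i, Continuous (τ i)) (hτs : ∀ i, Function.Surjective (τ i))
    (hτe : ∀ i, τ i ∘ T 0 = T i ∘ τ i)
    (hchain : ∀ i j : Fin k, i ≤ j → ∃ p : X i → X j,
        Continuous p ∧ p ∘ T i = T j ∘ p ∧ p ∘ τ i = τ j)
    (a : Fin k → ℝ) (ha1 : 0 < a 0) (ha : ∀ i, 0 ≤ a i)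
    (Z : Set (X 0)) (f : X 0 → ℝ) (hf : Continuous f) (ε : ℝ) (hε : 0 < ε)
    (𝒰 : ∀ i, Set (Set (X i))) (h𝒰 : ∀ i, IsOpenCover (𝒰 i))
    (e : Fin k → ℝ) (hepos : ∀ i, 0 < e i)
    (hleb : ∀ i, ∀ x : X i, ∃ U ∈ 𝒰 i, Metric.ball x (e i) ⊆ U) :
    ((∀ i, ε < e i / 2) →
        PLoc (T 0) a (fun i => pullCov (τ i) (𝒰 i)) Z f ≤ PBowenEps (T 0) T τ a Z f ε)
    ∧ ((∀ i, ∀ U ∈ 𝒰 i, Metric.diam U < ε) →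
        PBowenEps (T 0) T τ a Z f ε ≤ PLoc (T 0) a (fun i => pullCov (τ i) (𝒰 i)) Z f) := by
  classical
  set 𝒱 : Fin k → Set (Set (X 0)) := fun i => pullCov (τ i) (𝒰 i) with h𝒱
  have hsc : ∀ (i : Fin k) (l : ℕ) (y : X 0),
      τ i ((T 0)^[l] y) = (T i)^[l] (τ i y) := by
    intro i l y
    have : Function.Semiconj (τ i) (T 0) (T i) := fun x => congrFun (hτe i) x
    exact (this.iterate_right l) y
  constructor
  · -- (i)
    intro hε2
    apply sInf_le_sInf
    apply Set.image_mono
    intro s hs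
    simp only [Set.mem_setOf_eq] at hs ⊢
    have hle : lamLoc (T 0) a 𝒱 f s Z ≤ lamBowen (T 0) T τ a f s ε Z := by
      apply iSup_mono
      intro N
      simp only [lamLocN, lamBowenN]
      refine le_iInf fun D => le_iInf fun hDc => le_iInf fun hDcond => le_iInf fun hDcov => ?_
      refine iInf_le_of_le D <| iInf_le_of_le hDc <| iInf_le_of_le ?_ <|
        iInf_le_of_le hDcov le_rfl
      intro p hp
      obtain ⟨hN, hmeas, x, hx⟩ := hDcond p hp
      refine ⟨hN, hmeas, ?_⟩
      -- build the joint fiber element containing the Bowen ball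
      choose U hU hball using fun (i : Fin k) (l : ℕ) => hleb i ((T i)^[l] (τ i x))
      refine ⟨⋂ i : Fin k, ⋂ l ∈ Finset.range ⌈cw a i * (p.1 : ℝ)⌉₊,
          ((T 0)^[l]) ⁻¹' (τ i ⁻¹' U i l), ?_, ?_⟩
      · exact ⟨fun i l => τ i ⁻¹' U i l,
          fun i l _ => ⟨U i l, hU i l, rfl⟩, rfl⟩
      · intro y hy
        have hyB := hx hy
        simp only [Set.mem_iInter, Finset.mem_range]
        intro i l hl
        have hd := hyB i l hl
        have : (T i)^[l] (τ i y) ∈ Metric.ball ((T i)^[l] (τ i x)) (e i) := by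
          rw [Metric.mem_ball, dist_comm]
          have := hε2 i
          have := hepos i
          linarith
        have hUmem := hball i l this
        simp only [Set.mem_preimage]
        rw [hsc i l y]
        exact hUmem
    rw [hs] at hle
    exact le_antisymm hle zero_le
  · -- (ii)
    intro hdiam
    apply sInf_le_sInf
    apply Set.image_mono
    intro s hs
    simp only [Set.mem_setOf_eq] at hs ⊢
    by_cases hne : Nonempty (X 0)
    · have hle : lamBowen (T 0) T τ a f s ε Z ≤ lamLoc (T 0) a 𝒱 f s Z := by
        apply iSup_mono
        intro N
        simp only [lamLocN, lamBowenN]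
        refine le_iInf fun D => le_iInf fun hDc => le_iInf fun hDcond => le_iInf fun hDcov => ?_
        refine iInf_le_of_le D <| iInf_le_of_le hDc <| iInf_le_of_le ?_ <|
          iInf_le_of_le hDcov le_rfl
        intro p hp
        obtain ⟨hN, hmeas, A, ⟨V, hV, hAeq⟩, hsub⟩ := hDcond p hp
        refine ⟨hN, hmeas, ?_⟩
        rcases Set.eq_empty_or_nonempty p.2 with hP | ⟨x, hx⟩
        · exact ⟨Classical.arbitrary _, by rw [hP]; exact Set.empty_subset _⟩
        · refine ⟨x, fun y hy => ?_⟩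
          intro i j hj
          have hxA : x ∈ A := hsub hx
          have hyA : y ∈ A := hsub hy
          rw [hAeq] at hxA hyA
          simp only [Set.mem_iInter, Finset.mem_range, Set.mem_preimage] at hxA hyA
          obtain ⟨W, hW, hVW⟩ := hV i j hj
          have hxW : τ i ((T 0)^[j] x) ∈ W := by
            have := hxA i j hj; rw [← hVW] at this; exact this
          have hyW : τ i ((T 0)^[j] y) ∈ W := by
            have := hyA i j hj; rw [← hVW] at this; exact this
          rw [hsc i j x] at hxW
          rw [hsc i j y] at hyW
          calc dist ((T i)^[j] (τ i x)) ((T i)^[j] (τ i y))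
              ≤ Metric.diam W :=
                Metric.dist_le_diam_of_mem (isCompact_univ.isBounded.subset
                  (Set.subset_univ W)) hxW hyW
            _ < ε := hdiam i W hW
      rw [hs] at hle
      exact le_antisymm hle zero_le
    · -- X 0 empty: the Bowen quantity is 0 for every s
      have hZ : Z = ∅ := by
        rw [not_nonempty_iff] at hne
        exact Set.eq_empty_of_isEmpty Z
      have : lamBowen (T 0) T τ a f s ε Z = 0 := by
        refine le_antisymm (iSup_le fun N => ?_) zero_le
        refine iInf_le_of_le ∅ <| iInf_le_of_le Set.countable_empty <|
          iInf_le_of_le (fun p hp => absurd hp (Set.notMem_empty p)) <|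
          iInf_le_of_le (by rw [hZ]; exact Set.empty_subset _) ?_
        simp [tsum_empty]
      exact this

end WTP
end
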